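/- arXiv:0709.2318 — 4 statements merged into one kernel-verified Lean document; each statement's English description precedes it below -/
import Mathlib

section
/- Let ℓ > 1 be odd, ζ a primitive ℓ-th root of unity in ℂ, b_j = (ζ^{2j+1} + ζ^{-2j-1})/(ζ - ζ^{-1}), and [m] = (ζ^m - ζ^{-m})/(ζ - ζ^{-1}). Define φ_j(x) = ∏_{0 ≤ i ≤ ℓ-1, b_i ≠ b_j} (x - b_i). Then for 0 ≤ j ≤ ℏ - 1 with ℏ = (ℓ-1)/2, one has φ_j(b_j) = ℓ² / ((ζ - ζ^{-1})^ℓ · [2j+1]²). -/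
open Finset Polynomial

section aux
variable {ℓ : ℕ} {ζ : ℂ}

lemma aux_prod_pow (hℓ : 0 < ℓ) (hζ : IsPrimitiveRoot ζ ℓ) (p : ℂ → Prop) [DecidablePred p]
    (g : ℂ → ℂ) :
    ∏ x ∈ (nthRootsFinset ℓ (1 : ℂ)).filter p, g x
      = ∏ k ∈ (Finset.range ℓ).filter (fun k => p (ζ ^ k)), g (ζ ^ k) := by
  have : NeZero ℓ := ⟨hℓ.ne'⟩
  refine (Finset.prod_nbij (fun k => ζ ^ k) ?_ ?_ ?_ ?_).symm
  · intro k hk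
    simp only [mem_filter, mem_range] at hk ⊢
    refine ⟨(mem_nthRootsFinset hℓ (1 : ℂ)).mpr ?_, hk.2⟩
    rw [← pow_mul, mul_comm, pow_mul, hζ.pow_eq_one, one_pow]
  · intro k hk k' hk' h
    simp only [Finset.coe_filter, Set.mem_setOf_eq, mem_range] at hk hk'
    exact hζ.pow_inj hk.1 hk'.1 h
  · intro x hx
    simp only [Finset.coe_filter, Set.mem_setOf_eq, mem_range, mem_filter] at hx
    obtain ⟨i, hi, hix⟩ := hζ.eq_pow_of_pow_eq_one ((mem_nthRootsFinset hℓ (1 : ℂ)).mp hx.1)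
    refine ⟨i, ?_, hix⟩
    simp only [Finset.coe_filter, Set.mem_setOf_eq, mem_range]
    exact ⟨hi, by rw [hix]; exact hx.2⟩
  · intro k _; rfl
end aux

section aux2
variable {ℓ : ℕ} {ζ : ℂ}

-- bijection `i ↦ ζ^(2i+1)` from `range ℓ` to the `ℓ`-th roots of unity, `ℓ` odd.
lemma aux_prod_pow_odd (hℓ : 0 < ℓ) (hodd : Odd ℓ) (hζ : IsPrimitiveRoot ζ ℓ)
    (p : ℂ → Prop) [DecidablePred p] (g : ℂ → ℂ) :
    ∏ x ∈ (nthRootsFinset ℓ (1 : ℂ)).filter p, g x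
      = ∏ i ∈ (Finset.range ℓ).filter (fun i => p (ζ ^ (2 * i + 1))), g (ζ ^ (2 * i + 1)) := by
  have hcop : Nat.Coprime 2 ℓ := hodd.coprime_two_left
  have : NeZero ℓ := ⟨hℓ.ne'⟩
  have hz0 : ζ ≠ 0 := hζ.ne_zero hℓ.ne'
  have hpow : ∀ m m' : ℕ, ζ ^ m = ζ ^ m' ↔ m ≡ m' [MOD ℓ] := by
    intro m m'
    rw [Nat.modEq_iff_dvd]
    constructor
    · intro h
      refine (hζ.zpow_eq_one_iff_dvd _).mp ?_
      rw [zpow_sub₀ hz0, zpow_natCast, zpow_natCast, h, div_self (pow_ne_zero _ hz0)]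
    · intro h
      have h2 := (hζ.zpow_eq_one_iff_dvd _).mpr h
      rw [zpow_sub₀ hz0, zpow_natCast, zpow_natCast, div_eq_one_iff_eq (pow_ne_zero _ hz0)] at h2
      exact h2.symm
  refine (Finset.prod_nbij (fun i => ζ ^ (2 * i + 1)) ?_ ?_ ?_ ?_).symm
  · intro i hi
    simp only [mem_filter, mem_range] at hi ⊢
    refine ⟨(mem_nthRootsFinset hℓ (1 : ℂ)).mpr ?_, hi.2⟩
    rw [← pow_mul, mul_comm, pow_mul, hζ.pow_eq_one, one_pow]
  · intro i hi i' hi' h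
    simp only [Finset.coe_filter, Set.mem_setOf_eq, mem_range] at hi hi'
    have h1 : 2 * i + 1 ≡ 2 * i' + 1 [MOD ℓ] := (hpow _ _).mp h
    have h2 : 2 * i ≡ 2 * i' [MOD ℓ] := Nat.ModEq.add_right_cancel' 1 h1
    have h3 : i ≡ i' [MOD ℓ] := Nat.ModEq.cancel_left_of_coprime (by simpa using hcop) h2
    rwa [Nat.ModEq, Nat.mod_eq_of_lt hi.1, Nat.mod_eq_of_lt hi'.1] at h3
  · intro x hx
    simp only [Finset.coe_filter, Set.mem_setOf_eq, mem_range, mem_filter] at hx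
    obtain ⟨k, hk, hkx⟩ := hζ.eq_pow_of_pow_eq_one ((mem_nthRootsFinset hℓ (1 : ℂ)).mp hx.1)
    set h2 := (ℓ + 1) / 2 with hh2
    have h2two : 2 * h2 = ℓ + 1 := by obtain ⟨m, rfl⟩ := hodd; omega
    set i := (h2 * (k + ℓ - 1)) % ℓ with hi
    have hilt : i < ℓ := Nat.mod_lt _ hℓ
    have hmod : 2 * i + 1 ≡ k [MOD ℓ] := by
      calc 2 * i + 1 ≡ 2 * (h2 * (k + ℓ - 1)) + 1 [MOD ℓ] :=
            Nat.ModEq.add_right 1 (Nat.ModEq.mul_left 2 (Nat.mod_modEq _ ℓ))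
        _ = (ℓ + 1) * (k + ℓ - 1) + 1 := by rw [← h2two]; ring
        _ ≡ 1 * (k + ℓ - 1) + 1 [MOD ℓ] := by
            refine Nat.ModEq.add_right 1 (Nat.ModEq.mul_right _ ?_)
            exact Nat.add_mod_left ℓ 1
        _ = k + ℓ := by omega
        _ ≡ k [MOD ℓ] := Nat.add_mod_right k ℓ
    have hix : ζ ^ (2 * i + 1) = x := by rw [← hkx]; exact (hpow _ _).mpr hmod
    refine ⟨i, ?_, hix⟩
    simp only [Finset.coe_filter, Set.mem_setOf_eq, mem_range]
    exact ⟨hilt, by rw [hix]; exact hx.2⟩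
  · intro k _; rfl

-- scaling bijection `y ↦ a * y` on the roots of unity.
lemma aux_prod_scale (hℓ : 0 < ℓ) {a : ℂ} (ha : a ∈ nthRootsFinset ℓ (1 : ℂ))
    (p : ℂ → Prop) [DecidablePred p] (g : ℂ → ℂ) :
    ∏ x ∈ (nthRootsFinset ℓ (1 : ℂ)).filter p, g x
      = ∏ y ∈ (nthRootsFinset ℓ (1 : ℂ)).filter (fun y => p (a * y)), g (a * y) := by
  have ha0 : a ≠ 0 := ne_zero_of_mem_nthRootsFinset one_ne_zero ha
  have hainv : a⁻¹ ∈ nthRootsFinset ℓ (1 : ℂ) := by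
    rw [mem_nthRootsFinset hℓ] at ha ⊢
    rw [inv_pow, ha, inv_one]
  refine (Finset.prod_nbij' (fun y => a * y) (fun x => a⁻¹ * x) ?_ ?_ ?_ ?_ ?_).symm
  · intro y hy
    simp only [mem_filter] at hy ⊢
    exact ⟨by simpa using mul_mem_nthRootsFinset ha hy.1, hy.2⟩
  · intro x hx
    simp only [mem_filter] at hx ⊢
    refine ⟨by simpa using mul_mem_nthRootsFinset hainv hx.1, ?_⟩
    show p (a * (a⁻¹ * x))
    rw [← mul_assoc, mul_inv_cancel₀ ha0, one_mul]; exact hx.2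
  · intro y _
    show a⁻¹ * (a * y) = y
    rw [← mul_assoc, inv_mul_cancel₀ ha0, one_mul]
  · intro x _
    show a * (a⁻¹ * x) = x
    rw [← mul_assoc, mul_inv_cancel₀ ha0, one_mul]
  · intro y _; rfl
end aux2

section aux3
variable {ℓ : ℕ} {ζ : ℂ}

-- `∏_{x root of unity, x ≠ 1} (1 - x) = ℓ`
lemma aux_prod_one_sub (hℓ : 1 < ℓ) (hζ : IsPrimitiveRoot ζ ℓ) :
    ∏ x ∈ (nthRootsFinset ℓ (1 : ℂ)).filter (fun x => x ≠ 1), (1 - x) = (ℓ : ℂ) := by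
  have hℓ0 : 0 < ℓ := by omega
  have : NeZero ℓ := ⟨hℓ0.ne'⟩
  have hζ' : IsPrimitiveRoot ζ ((ℓ - 1) + 1) := by rwa [Nat.sub_add_cancel hℓ0]
  have key := hζ'.prod_one_sub_pow_eq_order
  calc ∏ x ∈ (nthRootsFinset ℓ (1 : ℂ)).filter (fun x => x ≠ 1), (1 - x)
      = ∏ k ∈ (Finset.range ℓ).filter (fun k => ζ ^ k ≠ 1), (1 - ζ ^ k) :=
        aux_prod_pow hℓ0 hζ (fun x => x ≠ 1) (fun x => 1 - x)
    _ = ∏ k ∈ Finset.range (ℓ - 1), (1 - ζ ^ (k + 1)) := by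
        refine (Finset.prod_nbij (fun k => k + 1) ?_ ?_ ?_ ?_).symm
        · intro k hk
          simp only [mem_range, mem_filter] at hk ⊢
          refine ⟨by omega, ?_⟩
          intro hone
          have := hζ.pow_inj (by omega : k + 1 < ℓ) hℓ0 (by simpa using hone)
          omega
        · intro k _ k' _ h
          have : k + 1 = k' + 1 := h
          omega
        · intro k hk
          simp only [Finset.coe_filter, Set.mem_setOf_eq, mem_range, Set.mem_image] at hk ⊢
          obtain ⟨hklt, hkne⟩ := hk
          have hk0 : k ≠ 0 := by rintro rfl; simp at hkne
          refine ⟨k - 1, ?_, show k - 1 + 1 = k by omega⟩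
          simp only [Finset.coe_range, Set.mem_Iio]
          omega
        · intro k _; rfl
    _ = (ℓ : ℂ) := by
        rw [key, Nat.cast_sub (by omega : 1 ≤ ℓ)]
        push_cast
        ring
end aux3

section aux4
variable {ℓ : ℕ} {ζ : ℂ}

lemma aux_prod_one_sub' (hℓ : 1 < ℓ) (hζ : IsPrimitiveRoot ζ ℓ) {u : ℂ}
    (hu : u ∈ nthRootsFinset ℓ (1 : ℂ)) (hu1 : u ≠ 1) :
    ∏ x ∈ (nthRootsFinset ℓ (1 : ℂ)).filter (fun x => x ≠ 1 ∧ x ≠ u), (1 - x)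
      = (ℓ : ℂ) / (1 - u) := by
  classical
  have h1u : (1:ℂ) - u ≠ 0 := sub_ne_zero.mpr (Ne.symm hu1)
  have hsplit : (nthRootsFinset ℓ (1 : ℂ)).filter (fun x => x ≠ 1)
      = insert u ((nthRootsFinset ℓ (1 : ℂ)).filter (fun x => x ≠ 1 ∧ x ≠ u)) := by
    ext x
    simp only [mem_filter, mem_insert]
    constructor
    · rintro ⟨hx, hx1⟩
      by_cases hxu : x = u
      · exact Or.inl hxu
      · exact Or.inr ⟨hx, hx1, hxu⟩
    · rintro (rfl | ⟨hx, hx1, _⟩)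
      · exact ⟨hu, hu1⟩
      · exact ⟨hx, hx1⟩
  have hnotmem : u ∉ (nthRootsFinset ℓ (1 : ℂ)).filter (fun x => x ≠ 1 ∧ x ≠ u) := by
    simp
  have hkey := aux_prod_one_sub hℓ hζ
  rw [hsplit, Finset.prod_insert hnotmem] at hkey
  rw [eq_div_iff h1u, mul_comm]
  exact hkey

lemma aux_prod_all (hℓ : 0 < ℓ) (hodd : Odd ℓ) (hζ : IsPrimitiveRoot ζ ℓ) :
    ∏ x ∈ nthRootsFinset ℓ (1 : ℂ), x = 1 := by
  classical
  have h := aux_prod_pow hℓ hζ (fun _ => True) (fun x => x)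
  simp only [Finset.filter_true] at h
  rw [h, Finset.prod_pow_eq_pow_sum]
  have hsum : ∑ k ∈ Finset.range ℓ, k = ℓ * ((ℓ - 1) / 2) := by
    obtain ⟨m, rfl⟩ := hodd
    have hm2 : (2 * m + 1 - 1) / 2 = m := by omega
    rw [hm2]
    have h2 := Finset.sum_range_id_mul_two (2 * m + 1)
    have h3 : (2 * m + 1) * (2 * m + 1 - 1) = ((2 * m + 1) * m) * 2 := by
      have he : 2 * m + 1 - 1 = 2 * m := by omega
      rw [he]; ring
    exact Nat.eq_of_mul_eq_mul_right (by norm_num) (h2.trans h3)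
  rw [hsum, pow_mul, hζ.pow_eq_one, one_pow]

open scoped Classical in
lemma aux_card (hℓ : 0 < ℓ) (hζ : IsPrimitiveRoot ζ ℓ) {v w : ℂ}
    (hv : v ∈ nthRootsFinset ℓ (1 : ℂ)) (hw : w ∈ nthRootsFinset ℓ (1 : ℂ)) (hvw : v ≠ w)
    (p : ℂ → Prop) [DecidablePred p] (hp : ∀ x, p x ↔ (x ≠ v ∧ x ≠ w)) :
    ((nthRootsFinset ℓ (1 : ℂ)).filter p).card = ℓ - 2 := by
  have he : (nthRootsFinset ℓ (1 : ℂ)).filter p = ((nthRootsFinset ℓ (1 : ℂ)).erase v).erase w := by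
    ext x
    simp only [mem_filter, mem_erase, hp]
    tauto
  rw [he, Finset.card_erase_of_mem, Finset.card_erase_of_mem hv, hζ.card_nthRootsFinset]
  · omega
  · exact Finset.mem_erase.mpr ⟨hvw.symm, hw⟩
end aux4

/-- The roots `b_j = (ζ^{2j+1} + ζ^{-(2j+1)})/(ζ - ζ⁻¹)`. -/
noncomputable def casimirRoot (ζ : ℂ) (j : ℕ) : ℂ :=
  (ζ ^ (2 * (j : ℤ) + 1) + ζ ^ (-(2 * (j : ℤ) + 1))) / (ζ - ζ⁻¹)

/-- The quantum integer `[m] = (ζ^m - ζ^{-m})/(ζ - ζ⁻¹)`. -/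
noncomputable def qInt (ζ : ℂ) (m : ℤ) : ℂ := (ζ ^ m - ζ ^ (-m)) / (ζ - ζ⁻¹)

open scoped Classical in
/-- for `0 ≤ j ≤ ℏ - 1`,
`φ_j(b_j) = ∏_{0 ≤ i ≤ ℓ-1, b_i ≠ b_j} (b_j - b_i) = ℓ² / ((ζ - ζ⁻¹)^ℓ · [2j+1]²)`. -/
theorem phi_eval_at_root (ℓ : ℕ) (hℓ : 1 < ℓ) (hodd : Odd ℓ) (ζ : ℂ)
    (hζ : IsPrimitiveRoot ζ ℓ) :
    ∀ j < (ℓ - 1) / 2,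
      ∏ i ∈ (Finset.range ℓ).filter (fun i => casimirRoot ζ i ≠ casimirRoot ζ j),
        (casimirRoot ζ j - casimirRoot ζ i)
      = (ℓ : ℂ) ^ 2 / ((ζ - ζ⁻¹) ^ ℓ * (qInt ζ (2 * j + 1)) ^ 2) := by
  intro j hj
  obtain ⟨w, hw⟩ := hodd
  have hodd : Odd ℓ := ⟨w, hw⟩
  have hℓ0 : 0 < ℓ := by omega
  have h2j : 2 * j + 1 < ℓ := by omega
  have hz0 : ζ ≠ 0 := hζ.ne_zero (by omega)
  set c : ℂ := ζ - ζ⁻¹ with hc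
  have hc0 : c ≠ 0 := by
    rw [hc]
    intro h
    have hz2 : ζ ^ 2 = 1 := by
      have h1 : ζ = ζ⁻¹ := by rwa [sub_eq_zero] at h
      rw [pow_two]; nth_rewrite 2 [h1]; exact mul_inv_cancel₀ hz0
    have := Nat.le_of_dvd (by norm_num) ((hζ.pow_eq_one_iff_dvd 2).mp hz2)
    omega
  set M : Finset ℂ := nthRootsFinset ℓ (1 : ℂ) with hM
  set a : ℂ := ζ ^ (2 * j + 1) with haa
  have haM : a ∈ M := by
    rw [hM, mem_nthRootsFinset hℓ0, haa, ← pow_mul, mul_comm, pow_mul, hζ.pow_eq_one, one_pow]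
  have ha0 : a ≠ 0 := pow_ne_zero _ hz0
  have hcop2 : Nat.Coprime ℓ 2 := Odd.coprime_two_right ⟨w, hw⟩
  have hasq : a * a ≠ 1 := by
    intro h
    have hz1 : ζ ^ (2 * (2 * j + 1)) = 1 := by
      rw [two_mul, pow_add, ← haa]; exact h
    have hdvd : ℓ ∣ 2 * (2 * j + 1) := (hζ.pow_eq_one_iff_dvd _).mp hz1
    have : ℓ ∣ 2 * j + 1 := hcop2.dvd_of_dvd_mul_left hdvd
    exact absurd (Nat.le_of_dvd (by omega) this) (by omega)
  have ha1 : a ≠ 1 := fun h => hasq (by rw [h, one_mul])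
  have hainvM : a⁻¹ ∈ M := by
    rw [hM, mem_nthRootsFinset hℓ0] at haM ⊢
    rw [inv_pow, haM, inv_one]
  have hane : a ≠ a⁻¹ := by
    intro h; apply hasq; nth_rewrite 2 [h]; exact mul_inv_cancel₀ ha0
  have hainv0 : a⁻¹ ≠ 0 := inv_ne_zero ha0
  have hainv1 : a⁻¹ ≠ 1 := by
    intro h; rw [inv_eq_one] at h; exact ha1 h
  have huinv : a⁻¹ * a⁻¹ ≠ 1 := by
    intro h; apply hasq; rwa [← mul_inv, inv_eq_one] at h
  -- rewrite casimirRoot in terms of natural powers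
  have hcas : ∀ i : ℕ, casimirRoot ζ i = (ζ ^ (2 * i + 1) + (ζ ^ (2 * i + 1))⁻¹) / c := by
    intro i
    rw [casimirRoot, hc,
      show (2 * (i : ℤ) + 1) = ((2 * i + 1 : ℕ) : ℤ) by push_cast; ring,
      zpow_neg, zpow_natCast]
  have hcasj : casimirRoot ζ j = (a + a⁻¹) / c := hcas j
  -- the key equivalence
  have hkey : ∀ x : ℂ, x ≠ 0 → ((x + x⁻¹) / c = (a + a⁻¹) / c ↔ (x = a ∨ x = a⁻¹)) := by
    intro x hx
    constructor
    · intro h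
      have h1 : x + x⁻¹ = a + a⁻¹ := by
        rw [div_eq_div_iff hc0 hc0] at h
        exact mul_right_cancel₀ hc0 h
      have e : (x - a) * (x - a⁻¹) = (x + x⁻¹ - (a + a⁻¹)) * x := by
        field_simp
        ring
      have h2 : (x - a) * (x - a⁻¹) = 0 := by rw [e, h1, sub_self, zero_mul]
      rcases mul_eq_zero.mp h2 with h3 | h3
      · exact Or.inl (by rwa [sub_eq_zero] at h3)
      · exact Or.inr (by rwa [sub_eq_zero] at h3)
    · rintro (rfl | rfl)
      · rfl
      · rw [inv_inv, add_comm]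
  -- step 1: transfer to a product over roots of unity
  have hstep1 :
      ∏ i ∈ (Finset.range ℓ).filter (fun i => casimirRoot ζ i ≠ casimirRoot ζ j),
        (casimirRoot ζ j - casimirRoot ζ i)
      = ∏ x ∈ M.filter (fun x => ¬(x = a ∨ x = a⁻¹)), ((a + a⁻¹) / c - (x + x⁻¹) / c) := by
    rw [aux_prod_pow_odd hℓ0 hodd hζ (fun x => ¬(x = a ∨ x = a⁻¹))
      (fun x => (a + a⁻¹) / c - (x + x⁻¹) / c)]
    apply Finset.prod_congr
    · apply Finset.filter_congr
      intro i _
      rw [hcas i, hcasj]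
      exact not_congr (hkey _ (pow_ne_zero _ hz0))
    · intro i _
      rw [hcas i, hcasj]
  set T : Finset ℂ := M.filter (fun x => x ≠ a ∧ x ≠ a⁻¹) with hT
  have hTT : M.filter (fun x => ¬(x = a ∨ x = a⁻¹)) = T := by
    rw [hT]; apply Finset.filter_congr; intro x _; rw [not_or]
  have hTsub : ∀ x ∈ T, x ∈ M ∧ x ≠ a ∧ x ≠ a⁻¹ := by
    intro x hx; rw [hT, Finset.mem_filter] at hx; exact ⟨hx.1, hx.2⟩
  have hcardT : T.card = ℓ - 2 := by
    rw [hT]; exact aux_card hℓ0 hζ haM hainvM hane _ (fun x => Iff.rfl)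
  -- ∏_{x ∈ T} x = 1
  have hprodM : ∏ x ∈ M, x = 1 := aux_prod_all hℓ0 hodd hζ
  have hTe : T = (M.erase a).erase a⁻¹ := by
    rw [hT]; ext x
    simp only [Finset.mem_filter, Finset.mem_erase]
    tauto
  have hprodT : ∏ x ∈ T, x = 1 := by
    have h1 : a⁻¹ * ∏ x ∈ T, x = ∏ x ∈ M.erase a, x := by
      rw [hTe]
      exact Finset.mul_prod_erase _ (fun x => x)
        (Finset.mem_erase.mpr ⟨hane.symm, hainvM⟩)
    have h2 : a * ∏ x ∈ M.erase a, x = ∏ x ∈ M, x :=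
      Finset.mul_prod_erase _ (fun x => x) haM
    have h3 : a * (a⁻¹ * ∏ x ∈ T, x) = 1 := by rw [h1, h2, hprodM]
    rwa [← mul_assoc, mul_inv_cancel₀ ha0, one_mul] at h3
  -- helper iffs
  have hiff1 : ∀ y : ℂ, a * y = a ↔ y = 1 := by
    intro y
    constructor
    · intro h; exact mul_left_cancel₀ ha0 (by rw [h, mul_one])
    · intro h; rw [h, mul_one]
  have hiff2 : ∀ y : ℂ, a * y = a⁻¹ ↔ y = a⁻¹ * a⁻¹ := by
    intro y
    constructor
    · intro h
      have h2 := congrArg (fun t => a⁻¹ * t) h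
      beta_reduce at h2
      rwa [← mul_assoc, inv_mul_cancel₀ ha0, one_mul] at h2
    · intro h; rw [h, ← mul_assoc, mul_inv_cancel₀ ha0, one_mul]
  have hiff3 : ∀ y : ℂ, a⁻¹ * y = a ↔ y = a * a := by
    intro y
    constructor
    · intro h
      have h2 := congrArg (fun t => a * t) h
      beta_reduce at h2
      rwa [← mul_assoc, mul_inv_cancel₀ ha0, one_mul] at h2
    · intro h; rw [h, ← mul_assoc, inv_mul_cancel₀ ha0, one_mul]
  have hiff4 : ∀ y : ℂ, a⁻¹ * y = a⁻¹ ↔ y = 1 := by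
    intro y
    constructor
    · intro h; exact mul_left_cancel₀ hainv0 (by rw [h, mul_one])
    · intro h; rw [h, mul_one]
  have huu : a⁻¹ * a⁻¹ ∈ M := by simpa using mul_mem_nthRootsFinset hainvM hainvM
  have haa2 : a * a ∈ M := by simpa using mul_mem_nthRootsFinset haM haM
  -- N1 : ∏_{x ∈ T} (a - x)
  have hN1 : ∏ x ∈ T, (a - x) = a ^ (ℓ - 2) * ((ℓ : ℂ) / (1 - a⁻¹ * a⁻¹)) := by
    rw [hT, aux_prod_scale hℓ0 haM (fun x => x ≠ a ∧ x ≠ a⁻¹) (fun x => a - x)]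
    have hfeq : (M.filter fun y => a * y ≠ a ∧ a * y ≠ a⁻¹)
        = M.filter (fun y => y ≠ 1 ∧ y ≠ a⁻¹ * a⁻¹) := by
      apply Finset.filter_congr
      intro y _
      exact and_congr (not_congr (hiff1 y)) (not_congr (hiff2 y))
    rw [hfeq]
    have hprod2 : ∏ y ∈ M.filter (fun y => y ≠ 1 ∧ y ≠ a⁻¹ * a⁻¹), (a - a * y)
        = ∏ y ∈ M.filter (fun y => y ≠ 1 ∧ y ≠ a⁻¹ * a⁻¹), (a * (1 - y)) :=
      Finset.prod_congr rfl (fun y _ => by ring)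
    rw [hprod2, Finset.prod_mul_distrib, Finset.prod_const,
      aux_card hℓ0 hζ (Polynomial.one_mem_nthRootsFinset hℓ0) huu (Ne.symm huinv) _ (fun x => Iff.rfl),
      aux_prod_one_sub' hℓ hζ huu huinv]
  -- N2 : ∏_{x ∈ T} (a * x - 1)
  have hN2 : ∏ x ∈ T, (a * x - 1) = -((ℓ : ℂ) / (1 - a * a)) := by
    rw [hT, aux_prod_scale hℓ0 hainvM (fun x => x ≠ a ∧ x ≠ a⁻¹) (fun x => a * x - 1)]
    have hfeq : (M.filter fun y => a⁻¹ * y ≠ a ∧ a⁻¹ * y ≠ a⁻¹)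
        = M.filter (fun y => y ≠ 1 ∧ y ≠ a * a) := by
      apply Finset.filter_congr
      intro y _
      rw [and_comm]
      exact and_congr (not_congr (hiff4 y)) (not_congr (hiff3 y))
    rw [hfeq]
    have hprod2 : ∏ y ∈ M.filter (fun y => y ≠ 1 ∧ y ≠ a * a), (a * (a⁻¹ * y) - 1)
        = ∏ y ∈ M.filter (fun y => y ≠ 1 ∧ y ≠ a * a), ((-1) * (1 - y)) :=
      Finset.prod_congr rfl (fun y _ => by
        rw [← mul_assoc, mul_inv_cancel₀ ha0, one_mul]; ring)
    rw [hprod2, Finset.prod_mul_distrib, Finset.prod_const,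
      aux_card hℓ0 hζ (Polynomial.one_mem_nthRootsFinset hℓ0) haa2 (Ne.symm hasq) _ (fun x => Iff.rfl),
      aux_prod_one_sub' hℓ hζ haa2 hasq]
    have hoddl2 : Odd (ℓ - 2) := ⟨w - 1, by omega⟩
    rw [hoddl2.neg_one_pow]
    ring
  -- assemble
  have hx0T : ∀ x ∈ T, (a + a⁻¹) / c - (x + x⁻¹) / c = ((a - x) * (a * x - 1)) / ((a * c) * x) := by
    intro x hx
    have hx0 : x ≠ 0 := ne_zero_of_mem_nthRootsFinset one_ne_zero (hTsub x hx).1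
    field_simp
    ring
  have hsplit : ∏ x ∈ T, ((a + a⁻¹) / c - (x + x⁻¹) / c)
      = (∏ x ∈ T, (a - x)) * (∏ x ∈ T, (a * x - 1)) / ((a * c) ^ (ℓ - 2) * ∏ x ∈ T, x) := by
    rw [Finset.prod_congr rfl hx0T, Finset.prod_div_distrib, Finset.prod_mul_distrib,
      Finset.prod_mul_distrib, Finset.prod_const, hcardT]
  rw [hstep1, hTT, hsplit, hN1, hN2, hprodT, mul_one]
  -- final algebra
  have hq : qInt ζ (2 * (j : ℤ) + 1) = (a - a⁻¹) / c := by
    rw [qInt, hc, haa,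
      show (2 * (j : ℤ) + 1) = ((2 * j + 1 : ℕ) : ℤ) by push_cast; ring,
      zpow_neg, zpow_natCast]
  rw [hq]
  have h1u1 : (1 : ℂ) - a⁻¹ * a⁻¹ ≠ 0 := sub_ne_zero.mpr (Ne.symm huinv)
  have h1u2 : (1 : ℂ) - a * a ≠ 0 := sub_ne_zero.mpr (Ne.symm hasq)
  have hqne : a - a⁻¹ ≠ 0 := sub_ne_zero.mpr hane
  have hcl : c ^ ℓ = c ^ (ℓ - 2) * c ^ 2 := by
    rw [← pow_add]; congr 1; omega
  rw [hcl, mul_pow]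
  clear_value a c
  have hcn : c ^ (ℓ - 2) ≠ 0 := pow_ne_zero _ hc0
  have han : a ^ (ℓ - 2) ≠ 0 := pow_ne_zero _ ha0
  generalize hA : a ^ (ℓ - 2) = A at han ⊢
  generalize hC : c ^ (ℓ - 2) = C at hcn ⊢
  field_simp
  have hsq : a * a - 1 ≠ 0 := sub_ne_zero.mpr hasq
  have hD1 : (A * a ^ 2 * C * 2 + (-(A * a ^ 4 * C) - A * C)) ≠ 0 := by
    have he : A * a ^ 2 * C * 2 + (-(A * a ^ 4 * C) - A * C) = -(A * C * (a * a - 1) ^ 2) := by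
      ring
    rw [he]
    exact neg_ne_zero.mpr (mul_ne_zero (mul_ne_zero han hcn) (pow_ne_zero _ hsq))
  have hD2 : (-(a ^ 2 * C * c ^ 2 * 2) + a ^ 4 * C * c ^ 2 + C * c ^ 2) ≠ 0 := by
    have he : -(a ^ 2 * C * c ^ 2 * 2) + a ^ 4 * C * c ^ 2 + C * c ^ 2
        = C * c ^ 2 * (a * a - 1) ^ 2 := by ring
    rw [he]
    exact mul_ne_zero (mul_ne_zero hcn (pow_ne_zero _ hc0)) (pow_ne_zero _ hsq)
  have hd1 : (a * a - 1) * (1 - a * a) * (A * C) ≠ 0 :=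
    mul_ne_zero (mul_ne_zero hsq h1u2) (mul_ne_zero han hcn)
  have hd2 : C * c ^ 2 * (a * a - 1) ^ 2 ≠ 0 :=
    mul_ne_zero (mul_ne_zero hcn (pow_ne_zero _ hc0)) (pow_ne_zero _ hsq)
  rw [neg_div', div_eq_div_iff (mul_ne_zero (by rw [sq]; exact hsq) (by rw [sq]; exact h1u2))
    (pow_ne_zero _ (by rw [sq]; exact hsq))]
  ring
end

section
/- Let A be a finite-dimensional Hopf algebra over a field k. Nonzero left integrals for the dual Hopf algebra A* exist and any two are scalar multiples of each other (the space of left integrals for A* is one-dimensional). -/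
/-- `λ : A →ₗ[k] k` is a left integral for the dual Hopf algebra `A*`:
`(id ⊗ λ) ∘ Δ (x) = λ(x) • 1_A` for all `x ∈ A`. -/
def IsLeftIntegralOnDual (k : Type*) (A : Type*) [CommSemiring k] [Semiring A]
    [HopfAlgebra k A] (lam : A →ₗ[k] k) : Prop :=
  ∀ x : A,
    (TensorProduct.rid k A) ((TensorProduct.map LinearMap.id lam) (Coalgebra.comul x))
      = lam x • (1 : A)

open TensorProduct Coalgebra HopfAlgebra

noncomputable section LS

namespace LSaux

variable {k : Type*} {A : Type*} [CommSemiring k] [Semiring A] [HopfAlgebra k A]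

/-- Convolution product on the dual of a coalgebra. -/
def conv (f g : A →ₗ[k] k) : A →ₗ[k] k :=
  LinearMap.mul' k k ∘ₗ TensorProduct.map f g ∘ₗ Coalgebra.comul

lemma conv_apply (f g : A →ₗ[k] k) {x : A} {ι : Type*} (r : Coalgebra.Repr k x ι) :
    conv f g x = ∑ i ∈ r.index, f (r.left i) * g (r.right i) := by
  simp only [conv, LinearMap.comp_apply]
  rw [← r.eq]
  simp [map_sum]

lemma conv_add_left (f f' g : A →ₗ[k] k) : conv (f + f') g = conv f g + conv f' g := by
  ext x
  simp [conv_apply _ _ (ℛ k x), add_mul, Finset.sum_add_distrib]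

lemma conv_add_right (f g g' : A →ₗ[k] k) : conv f (g + g') = conv f g + conv f g' := by
  ext x
  simp [conv_apply _ _ (ℛ k x), mul_add, Finset.sum_add_distrib]

lemma conv_smul_left (c : k) (f g : A →ₗ[k] k) : conv (c • f) g = c • conv f g := by
  ext x
  simp [conv_apply _ _ (ℛ k x), Finset.mul_sum, mul_assoc]

lemma conv_smul_right (c : k) (f g : A →ₗ[k] k) : conv f (c • g) = c • conv f g := by
  ext x
  simp [conv_apply _ _ (ℛ k x), Finset.mul_sum]
  congr 1; ext i; ring

/-- Convolution with fixed left argument, as a linear map. -/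
def convR (f : A →ₗ[k] k) : (A →ₗ[k] k) →ₗ[k] (A →ₗ[k] k) where
  toFun g := conv f g
  map_add' g g' := conv_add_right f g g'
  map_smul' c g := conv_smul_right c f g

@[simp] lemma convR_apply (f g : A →ₗ[k] k) : convR f g = conv f g := rfl

/-- counit contraction: `∑ ε(x₁) • x₂ = x`. -/
lemma sum_counit_smul {x : A} {ι : Type*} (r : Coalgebra.Repr k x ι) :
    ∑ i ∈ r.index, counit (R := k) (r.left i) • r.right i = x := by
  have h := Coalgebra.sum_counit_tmul_eq (R := k) r
  apply_fun TensorProduct.lid k A at h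
  rw [map_sum] at h
  simpa using h

/-- counit contraction: `∑ ε(x₂) • x₁ = x`. -/
lemma sum_smul_counit {x : A} {ι : Type*} (r : Coalgebra.Repr k x ι) :
    ∑ i ∈ r.index, counit (R := k) (r.right i) • r.left i = x := by
  have h := Coalgebra.sum_tmul_counit_eq (R := k) r
  apply_fun TensorProduct.rid k A at h
  rw [map_sum] at h
  simpa using h

lemma counit_conv (m : A →ₗ[k] k) : conv (counit (R := k)) m = m := by
  ext x
  rw [conv_apply _ _ (ℛ k x)]
  have := congrArg m (sum_smul_counit (ℛ k x))
  · calc ∑ i ∈ (ℛ k x).index, counit (R := k) ((ℛ k x).left i) * m ((ℛ k x).right i)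
        = m (∑ i ∈ (ℛ k x).index, counit (R := k) ((ℛ k x).left i) • (ℛ k x).right i) := by
          simp [map_sum, smul_eq_mul]
      _ = m x := by rw [sum_counit_smul]

/-- the key trilinear transfer lemma (coassociativity in `Repr` form). -/
lemma tri3 {W : Type*} [AddCommMonoid W] [Module k W]
    (G : A ⊗[k] (A ⊗[k] A) →ₗ[k] W) {x : A} {ι κ Λ : Type*} (r : Coalgebra.Repr k x ι)
    (rL : ∀ i, Coalgebra.Repr k (r.left i) κ) (rR : ∀ i, Coalgebra.Repr k (r.right i) Λ) :
    ∑ i ∈ r.index, ∑ j ∈ (rL i).index,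
        G ((rL i).left j ⊗ₜ[k] ((rL i).right j ⊗ₜ[k] r.right i))
      = ∑ i ∈ r.index, ∑ j ∈ (rR i).index,
        G (r.left i ⊗ₜ[k] ((rR i).left j ⊗ₜ[k] (rR i).right j)) := by
  have h := Coalgebra.sum_tmul_tmul_eq (R := k) r rL rR
  have := congrArg G h
  simpa [map_sum] using this

/-- Repr of a product from Reprs of factors. -/
def mulRepr {a b : A} {ι₁ ι₂ : Type*} (ra : Coalgebra.Repr k a ι₁) (rb : Coalgebra.Repr k b ι₂) :
    Coalgebra.Repr k (a * b) (ι₁ × ι₂) where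
  index := ra.index ×ˢ rb.index
  left := fun p => ra.left p.1 * rb.left p.2
  right := fun p => ra.right p.1 * rb.right p.2
  eq := by
    rw [Finset.sum_product]
    rw [Bialgebra.comul_mul, ← ra.eq, ← rb.eq, Finset.sum_mul_sum]
    simp [Algebra.TensorProduct.tmul_mul_tmul]


local notation "𝓢" => HopfAlgebra.antipode (R := k) (A := A)

lemma antipode_one : antipode (R := k) (1 : A) = 1 := by
  have h := mul_antipode_rTensor_comul_apply (R := k) (a := (1 : A))
  simpa [Algebra.TensorProduct.one_def] using h

lemma sum_mul_antipode_mul {c : A} {ι : Type*} (rc : Coalgebra.Repr k c ι) (z : A) :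
    ∑ n ∈ rc.index, rc.left n * (𝓢 (rc.right n) * z) = counit (R := k) c • z := by
  calc ∑ n ∈ rc.index, rc.left n * (𝓢 (rc.right n) * z)
      = (∑ n ∈ rc.index, rc.left n * 𝓢 (rc.right n)) * z := by
        rw [Finset.sum_mul]
        exact Finset.sum_congr rfl fun n _ => (mul_assoc _ _ _).symm
    _ = counit (R := k) c • z := by
        rw [sum_mul_antipode_eq_smul rc, smul_mul_assoc, one_mul]

lemma sum_antipode_mul_mul {c : A} {ι : Type*} (rc : Coalgebra.Repr k c ι) (z : A) :
    ∑ n ∈ rc.index, 𝓢 (rc.left n) * (rc.right n * z) = counit (R := k) c • z := by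
  calc ∑ n ∈ rc.index, 𝓢 (rc.left n) * (rc.right n * z)
      = (∑ n ∈ rc.index, 𝓢 (rc.left n) * rc.right n) * z := by
        rw [Finset.sum_mul]
        exact Finset.sum_congr rfl fun n _ => (mul_assoc _ _ _).symm
    _ = counit (R := k) c • z := by
        rw [sum_antipode_mul_eq_smul rc, smul_mul_assoc, one_mul]

/-- trilinear gadget. -/
def trilin (f₁ f₂ f₃ : A →ₗ[k] A) : A ⊗[k] (A ⊗[k] A) →ₗ[k] A :=
  LinearMap.mul' k A ∘ₗ TensorProduct.map f₁ (LinearMap.mul' k A ∘ₗ TensorProduct.map f₂ f₃)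

@[simp] lemma trilin_tmul (f₁ f₂ f₃ : A →ₗ[k] A) (u v w : A) :
    trilin f₁ f₂ f₃ (u ⊗ₜ[k] (v ⊗ₜ[k] w)) = f₁ u * (f₂ v * f₃ w) := by
  simp [trilin]



lemma sum4_swap {M : Type*} [AddCommMonoid M] {i1 i2 : Type*} {k1 : i1 → Type*} {k2 : i2 → Type*}
    (s1 : Finset i1) (t1 : ∀ i, Finset (k1 i)) (s2 : Finset i2) (t2 : ∀ j, Finset (k2 j))
    (f : ∀ i, k1 i → ∀ j, k2 j → M) :
    ∑ i ∈ s1, ∑ m ∈ t1 i, ∑ j ∈ s2, ∑ n ∈ t2 j, f i m j n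
      = ∑ j ∈ s2, ∑ n ∈ t2 j, ∑ i ∈ s1, ∑ m ∈ t1 i, f i m j n := by
  calc ∑ i ∈ s1, ∑ m ∈ t1 i, ∑ j ∈ s2, ∑ n ∈ t2 j, f i m j n
      = ∑ i ∈ s1, ∑ j ∈ s2, ∑ m ∈ t1 i, ∑ n ∈ t2 j, f i m j n :=
        Finset.sum_congr rfl fun i _ => Finset.sum_comm
    _ = ∑ j ∈ s2, ∑ i ∈ s1, ∑ m ∈ t1 i, ∑ n ∈ t2 j, f i m j n := Finset.sum_comm
    _ = ∑ j ∈ s2, ∑ i ∈ s1, ∑ n ∈ t2 j, ∑ m ∈ t1 i, f i m j n :=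
        Finset.sum_congr rfl fun j _ => Finset.sum_congr rfl fun i _ => Finset.sum_comm
    _ = ∑ j ∈ s2, ∑ n ∈ t2 j, ∑ i ∈ s1, ∑ m ∈ t1 i, f i m j n :=
        Finset.sum_congr rfl fun j _ => Finset.sum_comm

theorem antipode_mul' (a b : A) :
    antipode (R := k) (a * b) = antipode (R := k) b * antipode (R := k) a := by
  classical
  have ra := ℛ k a
  have rb := ℛ k b
  have raL : ∀ i, Coalgebra.Repr k (ra.left i) (A × A) := fun i => ℛ k _
  have raR : ∀ i, Coalgebra.Repr k (ra.right i) (A × A) := fun i => ℛ k _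
  have rbL : ∀ j, Coalgebra.Repr k (rb.left j) (A × A) := fun j => ℛ k _
  have rbR : ∀ j, Coalgebra.Repr k (rb.right j) (A × A) := fun j => ℛ k _
  have h1 : (∑ i ∈ ra.index, ∑ m ∈ (raR i).index, ∑ j ∈ rb.index, ∑ n ∈ (rbR j).index,
      𝓢 (ra.left i * rb.left j) * ((raR i).left m * ((rbR j).left n *
        (𝓢 ((rbR j).right n) * 𝓢 ((raR i).right m)))))
      = 𝓢 (a * b) := by
    calc ∑ i ∈ ra.index, ∑ m ∈ (raR i).index, ∑ j ∈ rb.index, ∑ n ∈ (rbR j).index,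
        𝓢 (ra.left i * rb.left j) * ((raR i).left m * ((rbR j).left n *
          (𝓢 ((rbR j).right n) * 𝓢 ((raR i).right m))))
        = ∑ i ∈ ra.index, ∑ m ∈ (raR i).index, ∑ j ∈ rb.index,
            counit (R := k) (rb.right j) •
              (𝓢 (ra.left i * rb.left j) * ((raR i).left m * 𝓢 ((raR i).right m))) := by
          refine Finset.sum_congr rfl fun i _ => Finset.sum_congr rfl fun m _ =>
            Finset.sum_congr rfl fun j _ => ?_
          rw [← Finset.mul_sum, ← Finset.mul_sum, sum_mul_antipode_mul (rbR j),
            mul_smul_comm, mul_smul_comm]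
      _ = ∑ i ∈ ra.index, ∑ m ∈ (raR i).index,
            𝓢 (ra.left i * b) * ((raR i).left m * 𝓢 ((raR i).right m)) := by
          refine Finset.sum_congr rfl fun i _ => Finset.sum_congr rfl fun m _ => ?_
          conv_rhs => rw [← sum_smul_counit rb]
          rw [Finset.mul_sum, map_sum, Finset.sum_mul]
          refine Finset.sum_congr rfl fun j _ => ?_
          rw [mul_smul_comm, map_smul, smul_mul_assoc]
      _ = ∑ i ∈ ra.index, counit (R := k) (ra.right i) • (𝓢 (ra.left i * b) * 1) := by
          refine Finset.sum_congr rfl fun i _ => ?_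
          rw [← Finset.mul_sum, sum_mul_antipode_eq_smul (raR i), mul_smul_comm]
      _ = 𝓢 (a * b) := by
          simp only [mul_one]
          conv_rhs => rw [show a = ∑ i ∈ ra.index, counit (R := k) (ra.right i) • ra.left i from
            (sum_smul_counit ra).symm]
          rw [Finset.sum_mul, map_sum]
          simp [smul_mul_assoc]
  have h2 : (∑ i ∈ ra.index, ∑ m ∈ (raR i).index, ∑ j ∈ rb.index, ∑ n ∈ (rbR j).index,
      𝓢 (ra.left i * rb.left j) * ((raR i).left m * ((rbR j).left n *
        (𝓢 ((rbR j).right n) * 𝓢 ((raR i).right m)))))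
      = 𝓢 b * 𝓢 a := by
    calc ∑ i ∈ ra.index, ∑ m ∈ (raR i).index, ∑ j ∈ rb.index, ∑ n ∈ (rbR j).index,
        𝓢 (ra.left i * rb.left j) * ((raR i).left m * ((rbR j).left n *
          (𝓢 ((rbR j).right n) * 𝓢 ((raR i).right m))))
        = ∑ i ∈ ra.index, ∑ m ∈ (raR i).index, ∑ j ∈ rb.index, ∑ n ∈ (rbL j).index,
            𝓢 (ra.left i * (rbL j).left n) * ((raR i).left m * ((rbL j).right n *
              (𝓢 (rb.right j) * 𝓢 ((raR i).right m)))) := by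
          refine Finset.sum_congr rfl fun i _ => Finset.sum_congr rfl fun m _ => ?_
          have h := tri3 (trilin (𝓢 ∘ₗ LinearMap.mulLeft k (ra.left i))
            (LinearMap.mulLeft k ((raR i).left m))
            (LinearMap.mulRight k (𝓢 ((raR i).right m)) ∘ₗ 𝓢)) rb rbL rbR
          simp only [trilin_tmul, LinearMap.comp_apply, LinearMap.mulLeft_apply,
            LinearMap.mulRight_apply, mul_assoc] at h
          simpa only [mul_assoc] using h.symm
      _ = ∑ j ∈ rb.index, ∑ n ∈ (rbL j).index, ∑ i ∈ ra.index, ∑ m ∈ (raR i).index,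
            𝓢 (ra.left i * (rbL j).left n) * ((raR i).left m * ((rbL j).right n *
              (𝓢 (rb.right j) * 𝓢 ((raR i).right m)))) :=
          sum4_swap _ _ _ _ _
      _ = ∑ j ∈ rb.index, ∑ n ∈ (rbL j).index, ∑ i ∈ ra.index, ∑ m ∈ (raL i).index,
            𝓢 ((raL i).left m * (rbL j).left n) * ((raL i).right m * ((rbL j).right n *
              (𝓢 (rb.right j) * 𝓢 (ra.right i)))) := by
          refine Finset.sum_congr rfl fun j _ => Finset.sum_congr rfl fun n _ => ?_
          have h := tri3 (trilin (𝓢 ∘ₗ LinearMap.mulRight k ((rbL j).left n))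
            (LinearMap.id)
            (LinearMap.mulLeft k ((rbL j).right n * 𝓢 (rb.right j)) ∘ₗ 𝓢)) ra raL raR
          simp only [trilin_tmul, LinearMap.comp_apply, LinearMap.mulLeft_apply,
            LinearMap.mulRight_apply, LinearMap.id_apply, mul_assoc] at h
          simpa only [mul_assoc] using h.symm
      _ = ∑ j ∈ rb.index, ∑ i ∈ ra.index, ∑ m ∈ (raL i).index, ∑ n ∈ (rbL j).index,
            𝓢 ((raL i).left m * (rbL j).left n) * (((raL i).right m * (rbL j).right n) *
              (𝓢 (rb.right j) * 𝓢 (ra.right i))) := by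
          refine Finset.sum_congr rfl fun j _ => ?_
          rw [Finset.sum_comm]
          refine Finset.sum_congr rfl fun i _ => ?_
          rw [Finset.sum_comm]
          exact Finset.sum_congr rfl fun m _ => Finset.sum_congr rfl fun n _ => by
            rw [mul_assoc]
      _ = ∑ j ∈ rb.index, ∑ i ∈ ra.index,
            counit (R := k) (ra.left i * rb.left j) • (𝓢 (rb.right j) * 𝓢 (ra.right i)) := by
          refine Finset.sum_congr rfl fun j _ => Finset.sum_congr rfl fun i _ => ?_
          have h := sum_antipode_mul_mul (mulRepr (raL i) (rbL j)) (𝓢 (rb.right j) * 𝓢 (ra.right i))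
          simp only [mulRepr] at h
          rw [Finset.sum_product] at h
          exact h
      _ = 𝓢 b * 𝓢 a := by
          have hb : (𝓢 b : A) = ∑ j ∈ rb.index, counit (R := k) (rb.left j) • 𝓢 (rb.right j) := by
            conv_lhs => rw [← sum_counit_smul rb]
            rw [map_sum]
            simp
          have ha : (𝓢 a : A) = ∑ i ∈ ra.index, counit (R := k) (ra.left i) • 𝓢 (ra.right i) := by
            conv_lhs => rw [← sum_counit_smul ra]
            rw [map_sum]
            simp
          rw [hb, ha, Finset.sum_mul]
          refine Finset.sum_congr rfl fun j _ => ?_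
          rw [Finset.mul_sum]
          refine Finset.sum_congr rfl fun i _ => ?_
          rw [Bialgebra.counit_mul, smul_mul_assoc, mul_smul_comm, smul_smul, mul_comm]
  exact h1.symm.trans h2




/-- `x ↦ τ((S ⊗ S)(Δ x))`. -/
def Gm : A →ₗ[k] A ⊗[k] A :=
  (TensorProduct.comm k A A).toLinearMap ∘ₗ TensorProduct.map 𝓢 𝓢 ∘ₗ Coalgebra.comul

lemma Gm_apply {c : A} {ι : Type*} (r : Coalgebra.Repr k c ι) :
    Gm c = ∑ m ∈ r.index, 𝓢 (r.right m) ⊗ₜ[k] 𝓢 (r.left m) := by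
  simp only [Gm, LinearMap.comp_apply]
  rw [← r.eq]
  simp [map_sum]

lemma Gm_conv_comul {c : A} {ι : Type*} (rc : Coalgebra.Repr k c ι) :
    ∑ j ∈ rc.index, Gm (rc.left j) * Coalgebra.comul (R := k) (rc.right j)
      = counit (R := k) c • 1 := by
  classical
  have rcL : ∀ j, Coalgebra.Repr k (rc.left j) (A × A) := fun j => ℛ k _
  have rcR : ∀ j, Coalgebra.Repr k (rc.right j) (A × A) := fun j => ℛ k _
  let G3 : A ⊗[k] (A ⊗[k] A) →ₗ[k] A ⊗[k] A :=
    LinearMap.mul' k (A ⊗[k] A) ∘ₗ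
      TensorProduct.map ((TensorProduct.comm k A A).toLinearMap ∘ₗ TensorProduct.map 𝓢 𝓢)
        Coalgebra.comul ∘ₗ (TensorProduct.assoc k A A A).symm.toLinearMap
  have hG3 : ∀ u v w : A, G3 (u ⊗ₜ[k] (v ⊗ₜ[k] w)) = (𝓢 v ⊗ₜ[k] 𝓢 u) * Coalgebra.comul (R := k) w := by
    intro u v w; simp [G3]
  calc ∑ j ∈ rc.index, Gm (rc.left j) * Coalgebra.comul (R := k) (rc.right j)
      = ∑ j ∈ rc.index, ∑ m ∈ (rcL j).index,
          G3 ((rcL j).left m ⊗ₜ[k] ((rcL j).right m ⊗ₜ[k] rc.right j)) := by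
        refine Finset.sum_congr rfl fun j _ => ?_
        rw [Gm_apply (rcL j), Finset.sum_mul]
        exact Finset.sum_congr rfl fun m _ => (hG3 _ _ _).symm
    _ = ∑ j ∈ rc.index, ∑ m ∈ (rcR j).index,
          G3 (rc.left j ⊗ₜ[k] ((rcR j).left m ⊗ₜ[k] (rcR j).right m)) := tri3 G3 rc rcL rcR
    _ = ∑ j ∈ rc.index, (1 : A) ⊗ₜ[k] (𝓢 (rc.left j) * rc.right j) := by
        refine Finset.sum_congr rfl fun j _ => ?_
        have rc3L : ∀ m, Coalgebra.Repr k ((rcR j).left m) (A × A) := fun m => ℛ k _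
        have rc3R : ∀ m, Coalgebra.Repr k ((rcR j).right m) (A × A) := fun m => ℛ k _
        let G4 : A ⊗[k] (A ⊗[k] A) →ₗ[k] A ⊗[k] A :=
          TensorProduct.map (LinearMap.mul' k A ∘ₗ TensorProduct.map 𝓢 LinearMap.id)
            (LinearMap.mulLeft k (𝓢 (rc.left j))) ∘ₗ (TensorProduct.assoc k A A A).symm.toLinearMap
        have hG4 : ∀ u v w : A, G4 (u ⊗ₜ[k] (v ⊗ₜ[k] w))
            = (𝓢 u * v) ⊗ₜ[k] (𝓢 (rc.left j) * w) := by
          intro u v w; simp [G4]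
        calc ∑ m ∈ (rcR j).index, G3 (rc.left j ⊗ₜ[k] ((rcR j).left m ⊗ₜ[k] (rcR j).right m))
            = ∑ m ∈ (rcR j).index, ∑ n ∈ (rc3R m).index,
                G4 ((rcR j).left m ⊗ₜ[k] ((rc3R m).left n ⊗ₜ[k] (rc3R m).right n)) := by
              refine Finset.sum_congr rfl fun m _ => ?_
              rw [hG3, ← (rc3R m).eq, Finset.mul_sum]
              refine Finset.sum_congr rfl fun n _ => ?_
              rw [hG4, Algebra.TensorProduct.tmul_mul_tmul]
          _ = ∑ m ∈ (rcR j).index, ∑ n ∈ (rc3L m).index,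
                G4 ((rc3L m).left n ⊗ₜ[k] ((rc3L m).right n ⊗ₜ[k] (rcR j).right m)) :=
              (tri3 G4 (rcR j) rc3L rc3R).symm
          _ = ∑ m ∈ (rcR j).index, counit (R := k) ((rcR j).left m) •
                ((1 : A) ⊗ₜ[k] (𝓢 (rc.left j) * (rcR j).right m)) := by
              refine Finset.sum_congr rfl fun m _ => ?_
              have : ∑ n ∈ (rc3L m).index, G4 ((rc3L m).left n ⊗ₜ[k]
                  ((rc3L m).right n ⊗ₜ[k] (rcR j).right m))
                  = (∑ n ∈ (rc3L m).index, 𝓢 ((rc3L m).left n) * (rc3L m).right n) ⊗ₜ[k]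
                    (𝓢 (rc.left j) * (rcR j).right m) := by
                rw [TensorProduct.sum_tmul]
                exact Finset.sum_congr rfl fun n _ => hG4 _ _ _
              rw [this, sum_antipode_mul_eq_smul (rc3L m), TensorProduct.smul_tmul']
          _ = (1 : A) ⊗ₜ[k] (𝓢 (rc.left j) * rc.right j) := by
              rw [show (𝓢 (rc.left j) * rc.right j : A)
                  = ∑ m ∈ (rcR j).index, counit (R := k) ((rcR j).left m) •
                      (𝓢 (rc.left j) * (rcR j).right m) by
                conv_lhs => rw [← sum_counit_smul (rcR j)]
                rw [Finset.mul_sum]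
                exact Finset.sum_congr rfl fun m _ => mul_smul_comm _ _ _]
              rw [TensorProduct.tmul_sum]
              exact Finset.sum_congr rfl fun m _ => (TensorProduct.tmul_smul _ _ _).symm
    _ = counit (R := k) c • 1 := by
        rw [← TensorProduct.tmul_sum, sum_antipode_mul_eq_smul rc]
        rw [TensorProduct.tmul_smul, Algebra.TensorProduct.one_def]

theorem comul_antipode (x : A) :
    Coalgebra.comul (R := k) (𝓢 x) = Gm x := by
  classical
  have r := ℛ k x
  have rL : ∀ i, Coalgebra.Repr k (r.left i) (A × A) := fun i => ℛ k _
  have rR : ∀ i, Coalgebra.Repr k (r.right i) (A × A) := fun i => ℛ k _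
  let G5 : A ⊗[k] (A ⊗[k] A) →ₗ[k] A ⊗[k] A :=
    LinearMap.mul' k (A ⊗[k] A) ∘ₗ TensorProduct.map Gm
      (LinearMap.mul' k (A ⊗[k] A) ∘ₗ TensorProduct.map Coalgebra.comul (Coalgebra.comul ∘ₗ 𝓢))
  have hG5 : ∀ u v w : A, G5 (u ⊗ₜ[k] (v ⊗ₜ[k] w))
      = Gm u * (Coalgebra.comul (R := k) v * Coalgebra.comul (R := k) (𝓢 w)) := by
    intro u v w; simp [G5]
  have h1 : (∑ i ∈ r.index, ∑ j ∈ (rR i).index,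
      G5 (r.left i ⊗ₜ[k] ((rR i).left j ⊗ₜ[k] (rR i).right j))) = Gm x := by
    calc ∑ i ∈ r.index, ∑ j ∈ (rR i).index,
        G5 (r.left i ⊗ₜ[k] ((rR i).left j ⊗ₜ[k] (rR i).right j))
        = ∑ i ∈ r.index, counit (R := k) (r.right i) • Gm (r.left i) := by
          refine Finset.sum_congr rfl fun i _ => ?_
          have : ∑ j ∈ (rR i).index, G5 (r.left i ⊗ₜ[k] ((rR i).left j ⊗ₜ[k] (rR i).right j))
              = Gm (r.left i) * Coalgebra.comul (R := k)
                  (∑ j ∈ (rR i).index, (rR i).left j * 𝓢 ((rR i).right j)) := by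
            rw [map_sum, Finset.mul_sum]
            refine Finset.sum_congr rfl fun j _ => ?_
            rw [hG5, Bialgebra.comul_mul]
          rw [this, sum_mul_antipode_eq_smul (rR i), map_smul, Bialgebra.comul_one,
            mul_smul_comm, mul_one]
      _ = Gm x := by
          conv_rhs => rw [← sum_smul_counit r]
          simp only [map_sum, map_smul]
  have h2 : (∑ i ∈ r.index, ∑ j ∈ (rR i).index,
      G5 (r.left i ⊗ₜ[k] ((rR i).left j ⊗ₜ[k] (rR i).right j))) = Coalgebra.comul (R := k) (𝓢 x) := by
    calc ∑ i ∈ r.index, ∑ j ∈ (rR i).index,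
        G5 (r.left i ⊗ₜ[k] ((rR i).left j ⊗ₜ[k] (rR i).right j))
        = ∑ i ∈ r.index, ∑ j ∈ (rL i).index,
            G5 ((rL i).left j ⊗ₜ[k] ((rL i).right j ⊗ₜ[k] r.right i)) := (tri3 G5 r rL rR).symm
      _ = ∑ i ∈ r.index, counit (R := k) (r.left i) • Coalgebra.comul (R := k) (𝓢 (r.right i)) := by
          refine Finset.sum_congr rfl fun i _ => ?_
          have : ∑ j ∈ (rL i).index, G5 ((rL i).left j ⊗ₜ[k] ((rL i).right j ⊗ₜ[k] r.right i))
              = (∑ j ∈ (rL i).index, Gm ((rL i).left j) * Coalgebra.comul (R := k) ((rL i).right j))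
                  * Coalgebra.comul (R := k) (𝓢 (r.right i)) := by
            rw [Finset.sum_mul]
            refine Finset.sum_congr rfl fun j _ => ?_
            rw [hG5, mul_assoc]
          rw [this, Gm_conv_comul (rL i), smul_mul_assoc, one_mul]
      _ = Coalgebra.comul (R := k) (𝓢 x) := by
          conv_rhs => rw [← sum_counit_smul r]
          simp only [map_sum, map_smul]
  exact h2.symm.trans h1

/-- swapped `Repr` for `𝓢 a`. -/
def sRepr {a : A} {ι : Type*} (r : Coalgebra.Repr k a ι) : Coalgebra.Repr k (𝓢 a) ι where
  index := r.index
  left := fun i => 𝓢 (r.right i)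
  right := fun i => 𝓢 (r.left i)
  eq := by
    rw [comul_antipode, Gm_apply r]


/-- scalar trilinear gadget. -/
def trilinK (f g h : A →ₗ[k] k) : A ⊗[k] (A ⊗[k] A) →ₗ[k] k :=
  LinearMap.mul' k k ∘ₗ TensorProduct.map f (LinearMap.mul' k k ∘ₗ TensorProduct.map g h)

@[simp] lemma trilinK_tmul (f g h : A →ₗ[k] k) (u v w : A) :
    trilinK f g h (u ⊗ₜ[k] (v ⊗ₜ[k] w)) = f u * (g v * h w) := by
  simp [trilinK]

lemma conv_assoc (f g h : A →ₗ[k] k) : conv (conv f g) h = conv f (conv g h) := by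
  classical
  ext x
  have r := ℛ k x
  have rL : ∀ i, Coalgebra.Repr k (r.left i) (A × A) := fun i => ℛ k _
  have rR : ∀ i, Coalgebra.Repr k (r.right i) (A × A) := fun i => ℛ k _
  have key := tri3 (trilinK f g h) r rL rR
  simp only [trilinK_tmul] at key
  calc conv (conv f g) h x
      = ∑ i ∈ r.index, conv f g (r.left i) * h (r.right i) := conv_apply _ _ r
    _ = ∑ i ∈ r.index, ∑ j ∈ (rL i).index,
          f ((rL i).left j) * ((g ((rL i).right j)) * h (r.right i)) := by
        refine Finset.sum_congr rfl fun i _ => ?_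
        rw [conv_apply _ _ (rL i), Finset.sum_mul]
        exact Finset.sum_congr rfl fun j _ => mul_assoc _ _ _
    _ = ∑ i ∈ r.index, ∑ j ∈ (rR i).index,
          f (r.left i) * (g ((rR i).left j) * h ((rR i).right j)) := key
    _ = ∑ i ∈ r.index, f (r.left i) * conv g h (r.right i) := by
        refine Finset.sum_congr rfl fun i _ => ?_
        rw [conv_apply _ _ (rR i), Finset.mul_sum]
    _ = conv f (conv g h) x := (conv_apply _ _ r).symm

/-- Convolution with fixed right argument, as a linear map in the left argument. -/
def convL (m : A →ₗ[k] k) : (A →ₗ[k] k) →ₗ[k] (A →ₗ[k] k) where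
  toFun f := conv f m
  map_add' f f' := conv_add_left f f' m
  map_smul' c f := conv_smul_left c f m

@[simp] lemma convL_apply (m f : A →ₗ[k] k) : convL m f = conv f m := rfl

/-- right action of `A` on the dual: `(f ↼ h)(x) = f (x * S h)`. -/
def actF (h : A) : (A →ₗ[k] k) →ₗ[k] (A →ₗ[k] k) :=
  LinearMap.lcomp k k (LinearMap.mulRight k (𝓢 h))

@[simp] lemma actF_apply (h : A) (f : A →ₗ[k] k) (x : A) : actF h f x = f (x * 𝓢 h) := rfl

lemma actF_one (f : A →ₗ[k] k) : actF (1 : A) f = f := by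
  ext x; simp [antipode_one]

lemma actF_actF (u v : A) (f : A →ₗ[k] k) : actF v (actF u f) = actF (u * v) f := by
  ext x; simp [antipode_mul', mul_assoc]

lemma actF_add_left (u v : A) (f : A →ₗ[k] k) : actF (u + v) f = actF u f + actF v f := by
  ext x; simp [mul_add]

lemma actF_smul_left (c : k) (u : A) (f : A →ₗ[k] k) : actF (c • u) f = c • actF u f := by
  ext x; simp [mul_smul_comm]

lemma actF_add_left' (u v : A) : actF (k := k) (u + v) = actF u + actF v := by
  ext f x; simp [mul_add]

lemma actF_smul_left' (c : k) (u : A) : actF (k := k) (A := A) (c • u) = c • actF u := by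
  ext f x; simp [mul_smul_comm]

/-- the action, bundled in the algebra variable. -/
def actE (f : A →ₗ[k] k) : A →ₗ[k] (A →ₗ[k] k) where
  toFun h := actF h f
  map_add' u v := actF_add_left u v f
  map_smul' c u := actF_smul_left c u f

@[simp] lemma actE_apply (f : A →ₗ[k] k) (h : A) : actE f h = actF h f := rfl


/-- Key compatibility: `g ⋆ (m ↼ h) = ∑ (g(·h₂) ⋆ m) ↼ h₁` (evaluated at `x`). -/
lemma conv_actF (g m : A →ₗ[k] k) {h : A} {ι : Type*} (r : Coalgebra.Repr k h ι) (x : A) :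
    conv g (actF h m) x
      = ∑ j ∈ r.index,
          conv (g ∘ₗ LinearMap.mulRight k (r.right j)) m (x * 𝓢 (r.left j)) := by
  classical
  have rx := ℛ k x
  have rl : ∀ j, Coalgebra.Repr k (r.left j) (A × A) := fun j => ℛ k _
  have rr : ∀ j, Coalgebra.Repr k (r.right j) (A × A) := fun j => ℛ k _
  have main : ∀ p : rx.ι,
      (∑ j ∈ r.index, ∑ t ∈ (rl j).index,
        g ((rx.left p * 𝓢 ((rl j).right t)) * r.right j) * m (rx.right p * 𝓢 ((rl j).left t)))
      = g (rx.left p) * m (rx.right p * 𝓢 h) := by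
    intro p
    let G : A ⊗[k] (A ⊗[k] A) →ₗ[k] k :=
      LinearMap.mul' k k ∘ₗ TensorProduct.map
        (m ∘ₗ LinearMap.mulLeft k (rx.right p) ∘ₗ 𝓢)
        (g ∘ₗ LinearMap.mul' k A ∘ₗ
          TensorProduct.map (LinearMap.mulLeft k (rx.left p) ∘ₗ 𝓢) LinearMap.id)
    have hG : ∀ u v w : A, G (u ⊗ₜ[k] (v ⊗ₜ[k] w))
        = m (rx.right p * 𝓢 u) * g ((rx.left p * 𝓢 v) * w) := by
      intro u v w; simp [G]
    have key := tri3 G r rl rr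
    simp only [hG] at key
    calc ∑ j ∈ r.index, ∑ t ∈ (rl j).index,
        g ((rx.left p * 𝓢 ((rl j).right t)) * r.right j) * m (rx.right p * 𝓢 ((rl j).left t))
        = ∑ j ∈ r.index, ∑ t ∈ (rl j).index,
            m (rx.right p * 𝓢 ((rl j).left t)) * g ((rx.left p * 𝓢 ((rl j).right t)) * r.right j) := by
          exact Finset.sum_congr rfl fun j _ => Finset.sum_congr rfl fun t _ => mul_comm _ _
      _ = ∑ j ∈ r.index, ∑ t ∈ (rr j).index,
            m (rx.right p * 𝓢 (r.left j)) * g ((rx.left p * 𝓢 ((rr j).left t)) * (rr j).right t) :=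
          key
      _ = ∑ j ∈ r.index, counit (R := k) (r.right j) •
            (m (rx.right p * 𝓢 (r.left j)) * g (rx.left p)) := by
          refine Finset.sum_congr rfl fun j _ => ?_
          have : ∑ t ∈ (rr j).index, g ((rx.left p * 𝓢 ((rr j).left t)) * (rr j).right t)
              = g (rx.left p * ∑ t ∈ (rr j).index, 𝓢 ((rr j).left t) * (rr j).right t) := by
            rw [Finset.mul_sum, map_sum]
            exact Finset.sum_congr rfl fun t _ => by rw [mul_assoc]
          rw [← Finset.mul_sum, this, sum_antipode_mul_eq_smul (rr j)]
          simp only [mul_smul_comm, mul_one, map_smul, smul_eq_mul]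
          ring
      _ = g (rx.left p) * m (rx.right p * 𝓢 h) := by
          have : (m (rx.right p * 𝓢 h) : k)
              = ∑ j ∈ r.index, counit (R := k) (r.right j) • m (rx.right p * 𝓢 (r.left j)) := by
            conv_lhs => rw [← sum_smul_counit r]
            simp [map_sum, map_smul, Finset.mul_sum, mul_smul_comm]
          rw [this, Finset.mul_sum]
          refine Finset.sum_congr rfl fun j _ => ?_
          rw [smul_eq_mul, smul_eq_mul]
          ring
  calc conv g (actF h m) x
      = ∑ p ∈ rx.index, g (rx.left p) * m (rx.right p * 𝓢 h) := by
        rw [conv_apply _ _ rx]; rfl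
    _ = ∑ p ∈ rx.index, ∑ j ∈ r.index, ∑ t ∈ (rl j).index,
          g ((rx.left p * 𝓢 ((rl j).right t)) * r.right j) * m (rx.right p * 𝓢 ((rl j).left t)) :=
        (Finset.sum_congr rfl fun p _ => (main p)).symm
    _ = ∑ j ∈ r.index, ∑ p ∈ rx.index, ∑ t ∈ (rl j).index,
          g ((rx.left p * 𝓢 ((rl j).right t)) * r.right j) * m (rx.right p * 𝓢 ((rl j).left t)) :=
        Finset.sum_comm
    _ = ∑ j ∈ r.index,
          conv (g ∘ₗ LinearMap.mulRight k (r.right j)) m (x * 𝓢 (r.left j)) := by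
        refine Finset.sum_congr rfl fun j _ => ?_
        rw [conv_apply _ _ (mulRepr rx (sRepr (rl j)))]
        simp only [mulRepr, sRepr, Finset.sum_product]
        rfl

end LSaux
end LS

noncomputable section LS2
namespace LSaux
open Module

variable {k : Type*} {A : Type*} [Field k] [Ring A] [HopfAlgebra k A] [FiniteDimensional k A]

local notation "𝓢" => HopfAlgebra.antipode (R := k) (A := A)

/-- the projection `P` onto the space of left integrals. -/
def Pl : (A →ₗ[k] k) →ₗ[k] (A →ₗ[k] k) :=
  ∑ i, actF (𝓢 ((Module.finBasis k A) i)) ∘ₗ convR ((Module.finBasis k A).coord i)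

lemma Pl_apply (f : A →ₗ[k] k) :
    Pl f = ∑ i, actF (𝓢 ((Module.finBasis k A) i)) (conv ((Module.finBasis k A).coord i) f) := by
  simp [Pl, LinearMap.sum_apply]

lemma dual_expand (ψ : A →ₗ[k] k) (w : A) : ∑ i, ψ ((Module.finBasis k A) i) * (Module.finBasis k A).coord i w = ψ w := by
  conv_rhs => rw [← (Module.finBasis k A).sum_repr w]
  rw [map_sum]
  refine Finset.sum_congr rfl fun i _ => ?_
  rw [map_smul, Basis.coord_apply, smul_eq_mul, mul_comm]

lemma dual_expand' (ψ : A →ₗ[k] k) : ∑ i, ψ ((Module.finBasis k A) i) • (Module.finBasis k A).coord i = ψ := by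
  ext w
  rw [LinearMap.sum_apply]
  simpa [smul_eq_mul] using dual_expand ψ w

lemma sum_conv_coord (ψ m : A →ₗ[k] k) :
    ∑ i, ψ ((Module.finBasis k A) i) • conv ((Module.finBasis k A).coord i) m = conv ψ m := by
  calc ∑ i, ψ ((Module.finBasis k A) i) • conv ((Module.finBasis k A).coord i) m
      = ∑ i, convL m (ψ ((Module.finBasis k A) i) • (Module.finBasis k A).coord i) := by
        simp [map_smul]
    _ = convL m (∑ i, ψ ((Module.finBasis k A) i) • (Module.finBasis k A).coord i) := by rw [map_sum]
    _ = conv ψ m := by rw [dual_expand']; rfl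

lemma comul_basis (y : A) :
    Coalgebra.comul (R := k) y
      = ∑ p, ∑ q, conv ((Module.finBasis k A).coord p) ((Module.finBasis k A).coord q) y • ((Module.finBasis k A) p ⊗ₜ[k] (Module.finBasis k A) q) := by
  classical
  have r := ℛ k y
  have h := ((Module.finBasis k A).tensorProduct (Module.finBasis k A)).sum_repr (Coalgebra.comul (R := k) y)
  have hrep : ∀ p q, ((Module.finBasis k A).tensorProduct (Module.finBasis k A)).repr (Coalgebra.comul (R := k) y) (p, q)
      = conv ((Module.finBasis k A).coord p) ((Module.finBasis k A).coord q) y := by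
    intro p q
    rw [conv_apply _ _ r, ← r.eq, map_sum]
    simp [Basis.tensorProduct_repr_tmul_apply, Basis.coord_apply]
    exact Finset.sum_congr rfl fun x _ => mul_comm _ _
  conv_lhs => rw [← h]
  rw [Fintype.sum_prod_type]
  refine Finset.sum_congr rfl fun p _ => Finset.sum_congr rfl fun q _ => ?_
  rw [hrep, Basis.tensorProduct_apply]

/-- coassociativity of the dual-basis coaction. -/
lemma Tp {W : Type*} [AddCommMonoid W] [Module k W]
    (B : (A →ₗ[k] k) →ₗ[k] A ⊗[k] A →ₗ[k] W) (f : A →ₗ[k] k) :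
    ∑ i, B (conv ((Module.finBasis k A).coord i) f) (Coalgebra.comul (R := k) ((Module.finBasis k A) i))
      = ∑ i, ∑ j, B (conv ((Module.finBasis k A).coord j) (conv ((Module.finBasis k A).coord i) f)) ((Module.finBasis k A) j ⊗ₜ[k] (Module.finBasis k A) i) := by
  classical
  calc ∑ i, B (conv ((Module.finBasis k A).coord i) f) (Coalgebra.comul (R := k) ((Module.finBasis k A) i))
      = ∑ i, ∑ p, ∑ q, conv ((Module.finBasis k A).coord p) ((Module.finBasis k A).coord q) ((Module.finBasis k A) i) •
          B (conv ((Module.finBasis k A).coord i) f) ((Module.finBasis k A) p ⊗ₜ[k] (Module.finBasis k A) q) := by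
        refine Finset.sum_congr rfl fun i _ => ?_
        rw [comul_basis ((Module.finBasis k A) i)]
        simp [map_sum, map_smul]
    _ = ∑ p, ∑ q, ∑ i, conv ((Module.finBasis k A).coord p) ((Module.finBasis k A).coord q) ((Module.finBasis k A) i) •
          B (conv ((Module.finBasis k A).coord i) f) ((Module.finBasis k A) p ⊗ₜ[k] (Module.finBasis k A) q) := by
        rw [Finset.sum_comm]
        exact Finset.sum_congr rfl fun p _ => Finset.sum_comm
    _ = ∑ p, ∑ q, B (conv ((Module.finBasis k A).coord p) (conv ((Module.finBasis k A).coord q) f)) ((Module.finBasis k A) p ⊗ₜ[k] (Module.finBasis k A) q) := by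
        refine Finset.sum_congr rfl fun p _ => Finset.sum_congr rfl fun q _ => ?_
        have : ∑ i, conv ((Module.finBasis k A).coord p) ((Module.finBasis k A).coord q) ((Module.finBasis k A) i) •
            B (conv ((Module.finBasis k A).coord i) f) ((Module.finBasis k A) p ⊗ₜ[k] (Module.finBasis k A) q)
            = (B.flip ((Module.finBasis k A) p ⊗ₜ[k] (Module.finBasis k A) q))
                (∑ i, conv ((Module.finBasis k A).coord p) ((Module.finBasis k A).coord q) ((Module.finBasis k A) i) • conv ((Module.finBasis k A).coord i) f) := by
          rw [map_sum]
          simp [map_smul]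
        rw [this, sum_conv_coord, ← conv_assoc]
        rfl
    _ = ∑ i, ∑ j, B (conv ((Module.finBasis k A).coord j) (conv ((Module.finBasis k A).coord i) f)) ((Module.finBasis k A) j ⊗ₜ[k] (Module.finBasis k A) i) := Finset.sum_comm


lemma Zlem (g m : A →ₗ[k] k) (x : A) :
    ∑ i, conv (g ∘ₗ LinearMap.mulRight k (𝓢 ((Module.finBasis k A) i)))
        (conv ((Module.finBasis k A).coord i) m) x
      = g 1 * m x := by
  classical
  have rx := ℛ k x
  have rxL : ∀ p, Coalgebra.Repr k (rx.left p) (A × A) := fun p => ℛ k _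
  have rxR : ∀ p, Coalgebra.Repr k (rx.right p) (A × A) := fun p => ℛ k _
  let G : A ⊗[k] (A ⊗[k] A) →ₗ[k] k :=
    LinearMap.mul' k k ∘ₗ TensorProduct.map
      (g ∘ₗ LinearMap.mul' k A ∘ₗ TensorProduct.map LinearMap.id 𝓢) m ∘ₗ
      (TensorProduct.assoc k A A A).symm.toLinearMap
  have hG : ∀ u v w : A, G (u ⊗ₜ[k] (v ⊗ₜ[k] w)) = g (u * 𝓢 v) * m w := by
    intro u v w; simp [G]
  have key := tri3 G rx rxL rxR
  simp only [hG] at key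
  calc ∑ i, conv (g ∘ₗ LinearMap.mulRight k (𝓢 ((Module.finBasis k A) i)))
        (conv ((Module.finBasis k A).coord i) m) x
      = ∑ i, ∑ p ∈ rx.index, g (rx.left p * 𝓢 ((Module.finBasis k A) i)) *
          conv ((Module.finBasis k A).coord i) m (rx.right p) := by
        refine Finset.sum_congr rfl fun i _ => ?_
        rw [conv_apply _ _ rx]
        rfl
    _ = ∑ p ∈ rx.index, ∑ i, (g ∘ₗ LinearMap.mulLeft k (rx.left p) ∘ₗ 𝓢) ((Module.finBasis k A) i) *
          conv ((Module.finBasis k A).coord i) m (rx.right p) := by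
        rw [Finset.sum_comm]
        rfl
    _ = ∑ p ∈ rx.index, conv (g ∘ₗ LinearMap.mulLeft k (rx.left p) ∘ₗ 𝓢) m (rx.right p) := by
        refine Finset.sum_congr rfl fun p _ => ?_
        have h := congrArg (fun F : A →ₗ[k] k => F (rx.right p))
          (sum_conv_coord (g ∘ₗ LinearMap.mulLeft k (rx.left p) ∘ₗ 𝓢) m)
        simpa [LinearMap.sum_apply, smul_eq_mul] using h
    _ = ∑ p ∈ rx.index, ∑ q ∈ (rxR p).index,
          g (rx.left p * 𝓢 ((rxR p).left q)) * m ((rxR p).right q) := by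
        refine Finset.sum_congr rfl fun p _ => ?_
        rw [conv_apply _ _ (rxR p)]
        rfl
    _ = ∑ p ∈ rx.index, ∑ q ∈ (rxL p).index,
          g ((rxL p).left q * 𝓢 ((rxL p).right q)) * m (rx.right p) := key.symm
    _ = g 1 * m x := by
        have : ∀ p, ∑ q ∈ (rxL p).index, g ((rxL p).left q * 𝓢 ((rxL p).right q))
            = counit (R := k) (rx.left p) * g 1 := by
          intro p
          have : ∑ q ∈ (rxL p).index, g ((rxL p).left q * 𝓢 ((rxL p).right q))
              = g (∑ q ∈ (rxL p).index, (rxL p).left q * 𝓢 ((rxL p).right q)) := by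
            rw [map_sum]
          rw [this, sum_mul_antipode_eq_smul (rxL p), map_smul, smul_eq_mul]
        calc ∑ p ∈ rx.index, ∑ q ∈ (rxL p).index,
            g ((rxL p).left q * 𝓢 ((rxL p).right q)) * m (rx.right p)
            = ∑ p ∈ rx.index, counit (R := k) (rx.left p) * g 1 * m (rx.right p) := by
              refine Finset.sum_congr rfl fun p _ => ?_
              rw [← Finset.sum_mul, this p]
          _ = g 1 * m x := by
              have h2 : (m x : k) = ∑ p ∈ rx.index, counit (R := k) (rx.left p) * m (rx.right p) := by
                conv_lhs => rw [← sum_counit_smul rx]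
                simp [map_sum, map_smul, smul_eq_mul]
              rw [h2, Finset.mul_sum]
              refine Finset.sum_congr rfl fun p _ => ?_
              ring


lemma conv_Pl (g f : A →ₗ[k] k) : conv g (Pl f) = g 1 • Pl f := by
  classical
  ext x
  have ri : ∀ i : Fin (Module.finrank k A), Coalgebra.Repr k ((Module.finBasis k A) i) (A × A) :=
    fun i => ℛ k _
  let C : A →ₗ[k] A →ₗ[k] (A →ₗ[k] k) →ₗ[k] k := LinearMap.mk₂ k
    (fun u v => LinearMap.applyₗ (x * 𝓢 (𝓢 v)) ∘ₗ convR (g ∘ₗ LinearMap.mulRight k (𝓢 u)))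
    (by
      intro u u' v
      have h : g ∘ₗ LinearMap.mulRight k (𝓢 u + 𝓢 u')
          = g ∘ₗ LinearMap.mulRight k (𝓢 u) + g ∘ₗ LinearMap.mulRight k (𝓢 u') := by
        ext a; simp [mul_add]
      ext m
      simp only [LinearMap.comp_apply, LinearMap.applyₗ_apply_apply, convR_apply, map_add,
        LinearMap.add_apply]
      rw [h, conv_add_left]
      simp)
    (by
      intro c u v
      have h : g ∘ₗ LinearMap.mulRight k (c • 𝓢 u) = c • (g ∘ₗ LinearMap.mulRight k (𝓢 u)) := by
        ext a; simp [mul_smul_comm]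
      ext m
      simp only [LinearMap.comp_apply, LinearMap.applyₗ_apply_apply, convR_apply, map_smul,
        LinearMap.smul_apply, RingHom.id_apply]
      rw [h, conv_smul_left]
      simp)
    (by
      intro u v v'
      ext m
      simp [mul_add, map_add])
    (by
      intro c u v
      ext m
      simp [mul_smul_comm, map_smul])
  let B : (A →ₗ[k] k) →ₗ[k] A ⊗[k] A →ₗ[k] k := (TensorProduct.lift C).flip
  have hB : ∀ (m : A →ₗ[k] k) (u v : A), B m (u ⊗ₜ[k] v)
      = conv (g ∘ₗ LinearMap.mulRight k (𝓢 u)) m (x * 𝓢 (𝓢 v)) := by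
    intro m u v
    simp [B, C]
  have h0 : conv g (Pl f) = ∑ i, conv g
      (actF (𝓢 ((Module.finBasis k A) i)) (conv ((Module.finBasis k A).coord i) f)) := by
    calc conv g (Pl f) = convR g (Pl f) := rfl
      _ = convR g (∑ i, actF (𝓢 ((Module.finBasis k A) i))
            (conv ((Module.finBasis k A).coord i) f)) := by rw [Pl_apply]
      _ = ∑ i, conv g (actF (𝓢 ((Module.finBasis k A) i))
            (conv ((Module.finBasis k A).coord i) f)) := map_sum _ _ _
  rw [show conv g (Pl f) x = (∑ i, conv g (actF (𝓢 ((Module.finBasis k A) i))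
      (conv ((Module.finBasis k A).coord i) f))) x by rw [h0]]
  rw [LinearMap.sum_apply]
  calc ∑ i, conv g (actF (𝓢 ((Module.finBasis k A) i))
        (conv ((Module.finBasis k A).coord i) f)) x
      = ∑ i, ∑ j ∈ (ri i).index, B (conv ((Module.finBasis k A).coord i) f)
          ((ri i).left j ⊗ₜ[k] (ri i).right j) := by
        refine Finset.sum_congr rfl fun i _ => ?_
        rw [conv_actF g _ (sRepr (ri i)) x]
        refine Finset.sum_congr rfl fun j _ => ?_
        rw [hB]
        simp only [sRepr]
    _ = ∑ i, B (conv ((Module.finBasis k A).coord i) f)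
          (Coalgebra.comul (R := k) ((Module.finBasis k A) i)) := by
        refine Finset.sum_congr rfl fun i _ => ?_
        rw [← map_sum, (ri i).eq]
    _ = ∑ i, ∑ j, B (conv ((Module.finBasis k A).coord j)
          (conv ((Module.finBasis k A).coord i) f)) ((Module.finBasis k A) j ⊗ₜ[k] (Module.finBasis k A) i) :=
        Tp B f
    _ = ∑ i, g 1 * conv ((Module.finBasis k A).coord i) f (x * 𝓢 (𝓢 ((Module.finBasis k A) i))) := by
        refine Finset.sum_congr rfl fun i _ => ?_
        simp only [hB]
        exact Zlem g (conv ((Module.finBasis k A).coord i) f) (x * 𝓢 (𝓢 ((Module.finBasis k A) i)))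
    _ = (g 1 • Pl f) x := by
        rw [Pl_apply]
        simp [LinearMap.sum_apply, Finset.mul_sum, smul_eq_mul]

lemma Pl_expand (m : A →ₗ[k] k) :
    ∑ i, actF ((Module.finBasis k A) i) (Pl (conv ((Module.finBasis k A).coord i) m)) = m := by
  classical
  have ri : ∀ i : Fin (Module.finrank k A), Coalgebra.Repr k ((Module.finBasis k A) i) (A × A) :=
    fun i => ℛ k _
  let C2 : A →ₗ[k] A →ₗ[k] (A →ₗ[k] k) →ₗ[k] (A →ₗ[k] k) := LinearMap.mk₂ k
    (fun u v => actF (𝓢 u * v))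
    (by intro u u' v; rw [map_add, add_mul, actF_add_left'])
    (by intro c u v; rw [map_smul, smul_mul_assoc, actF_smul_left'])
    (by intro u v v'; rw [mul_add, actF_add_left'])
    (by intro u c v; rw [mul_smul_comm, actF_smul_left'])
  let B2 : (A →ₗ[k] k) →ₗ[k] A ⊗[k] A →ₗ[k] (A →ₗ[k] k) := (TensorProduct.lift C2).flip
  have hB2 : ∀ (m' : A →ₗ[k] k) (u v : A), B2 m' (u ⊗ₜ[k] v) = actF (𝓢 u * v) m' := by
    intro m' u v
    simp [B2, C2]
  calc ∑ i, actF ((Module.finBasis k A) i) (Pl (conv ((Module.finBasis k A).coord i) m))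
      = ∑ i, ∑ j, B2 (conv ((Module.finBasis k A).coord j)
          (conv ((Module.finBasis k A).coord i) m))
          ((Module.finBasis k A) j ⊗ₜ[k] (Module.finBasis k A) i) := by
        refine Finset.sum_congr rfl fun i _ => ?_
        rw [Pl_apply, map_sum]
        refine Finset.sum_congr rfl fun j _ => ?_
        rw [actF_actF, hB2]
    _ = ∑ i, B2 (conv ((Module.finBasis k A).coord i) m)
          (Coalgebra.comul (R := k) ((Module.finBasis k A) i)) := (Tp B2 m).symm
    _ = ∑ i, counit (R := k) ((Module.finBasis k A) i) •
          conv ((Module.finBasis k A).coord i) m := by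
        refine Finset.sum_congr rfl fun i _ => ?_
        calc B2 (conv ((Module.finBasis k A).coord i) m)
              (Coalgebra.comul (R := k) ((Module.finBasis k A) i))
            = ∑ s ∈ (ri i).index, actF (𝓢 ((ri i).left s) * (ri i).right s)
                (conv ((Module.finBasis k A).coord i) m) := by
              rw [← (ri i).eq, map_sum]
              simp only [hB2]
          _ = actE (conv ((Module.finBasis k A).coord i) m)
                (∑ s ∈ (ri i).index, 𝓢 ((ri i).left s) * (ri i).right s) := by
              rw [map_sum]; rfl
          _ = counit (R := k) ((Module.finBasis k A) i) •
                conv ((Module.finBasis k A).coord i) m := by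
              rw [sum_antipode_mul_eq_smul (ri i), map_smul]
              simp [actF_one]
    _ = conv (Coalgebra.counit (R := k)) m := sum_conv_coord _ m
    _ = m := counit_conv m


/-- left integral property, convolution form. -/
def LInt (lam : A →ₗ[k] k) : Prop := ∀ g : A →ₗ[k] k, conv g lam = g 1 • lam

lemma lint_Pl (f : A →ₗ[k] k) : LInt (Pl f) := fun g => conv_Pl g f

lemma conv_actF_int {lam : A →ₗ[k] k} (hl : LInt lam) (g : A →ₗ[k] k) {h : A}
    {ι : Type*} (r : Coalgebra.Repr k h ι) :
    conv g (actF h lam) = ∑ j ∈ r.index, g (r.right j) • actF (r.left j) lam := by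
  ext x
  rw [conv_actF g lam r x, LinearMap.sum_apply]
  refine Finset.sum_congr rfl fun j _ => ?_
  rw [hl (g ∘ₗ LinearMap.mulRight k (r.right j))]
  simp [smul_eq_mul]

lemma Pl_actF_int {lam : A →ₗ[k] k} (hl : LInt lam) (h : A) :
    Pl (actF h lam) = counit (R := k) h • lam := by
  classical
  have r := ℛ k h
  rw [Pl_apply]
  calc ∑ i, actF (𝓢 ((Module.finBasis k A) i))
        (conv ((Module.finBasis k A).coord i) (actF h lam))
      = ∑ i, ∑ j ∈ r.index, (Module.finBasis k A).coord i (r.right j) •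
          actF (r.left j * 𝓢 ((Module.finBasis k A) i)) lam := by
        refine Finset.sum_congr rfl fun i _ => ?_
        rw [conv_actF_int hl _ r, map_sum]
        refine Finset.sum_congr rfl fun j _ => ?_
        rw [map_smul, actF_actF]
    _ = ∑ j ∈ r.index, ∑ i, (Module.finBasis k A).coord i (r.right j) •
          actF (r.left j * 𝓢 ((Module.finBasis k A) i)) lam := Finset.sum_comm
    _ = ∑ j ∈ r.index, actF (r.left j * 𝓢 (r.right j)) lam := by
        refine Finset.sum_congr rfl fun j _ => ?_
        have hT : ∀ u : A, actF (r.left j * 𝓢 u) lam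
            = (actE lam ∘ₗ LinearMap.mulLeft k (r.left j) ∘ₗ 𝓢) u := fun u => rfl
        calc ∑ i, (Module.finBasis k A).coord i (r.right j) •
              actF (r.left j * 𝓢 ((Module.finBasis k A) i)) lam
            = (actE lam ∘ₗ LinearMap.mulLeft k (r.left j) ∘ₗ 𝓢)
                (∑ i, (Module.finBasis k A).coord i (r.right j) • (Module.finBasis k A) i) := by
              rw [map_sum]
              refine Finset.sum_congr rfl fun i _ => ?_
              rw [map_smul, hT]
          _ = actF (r.left j * 𝓢 (r.right j)) lam := by
              rw [show (∑ i, (Module.finBasis k A).coord i (r.right j) • (Module.finBasis k A) i)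
                  = r.right j by
                simp only [Basis.coord_apply]
                exact (Module.finBasis k A).sum_repr (r.right j)]
              exact (hT _).symm
    _ = actE lam (∑ j ∈ r.index, r.left j * 𝓢 (r.right j)) := by rw [map_sum]; rfl
    _ = counit (R := k) h • lam := by
        rw [sum_mul_antipode_eq_smul r, map_smul]
        simp [actF_one]

lemma Pl_int {lam : A →ₗ[k] k} (hl : LInt lam) : Pl lam = lam := by
  have h := Pl_actF_int hl 1
  rw [actF_one] at h
  simpa using h

lemma Rf_eq {lam : A →ₗ[k] k} (hl : LInt lam) (F : (A →ₗ[k] k) →ₗ[k] k) (h : A) :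
    ∑ i, F (Pl (conv ((Module.finBasis k A).coord i) (actF h lam))) • (Module.finBasis k A) i
      = F lam • h := by
  classical
  have r := ℛ k h
  calc ∑ i, F (Pl (conv ((Module.finBasis k A).coord i) (actF h lam))) • (Module.finBasis k A) i
      = ∑ i, ∑ j ∈ r.index, ((Module.finBasis k A).coord i (r.right j) *
          (counit (R := k) (r.left j) * F lam)) • (Module.finBasis k A) i := by
        refine Finset.sum_congr rfl fun i _ => ?_
        rw [conv_actF_int hl _ r, map_sum, map_sum]
        rw [Finset.sum_smul]
        refine Finset.sum_congr rfl fun j _ => ?_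
        rw [map_smul, map_smul, Pl_actF_int hl, map_smul]
        simp [smul_smul, mul_assoc, smul_eq_mul]
    _ = ∑ j ∈ r.index, counit (R := k) (r.left j) • (F lam •
          (∑ i, (Module.finBasis k A).coord i (r.right j) • (Module.finBasis k A) i)) := by
        rw [Finset.sum_comm]
        refine Finset.sum_congr rfl fun j _ => ?_
        rw [Finset.smul_sum, Finset.smul_sum]
        refine Finset.sum_congr rfl fun i _ => ?_
        rw [smul_smul, smul_smul]
        congr 1
        ring
    _ = F lam • h := by
        have : ∀ j, (∑ i, (Module.finBasis k A).coord i (r.right j) • (Module.finBasis k A) i)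
            = r.right j := by
          intro j
          simp only [Basis.coord_apply]
          exact (Module.finBasis k A).sum_repr (r.right j)
        calc ∑ j ∈ r.index, counit (R := k) (r.left j) • (F lam • (∑ i,
              (Module.finBasis k A).coord i (r.right j) • (Module.finBasis k A) i))
            = F lam • ∑ j ∈ r.index, counit (R := k) (r.left j) • r.right j := by
              rw [Finset.smul_sum]
              refine Finset.sum_congr rfl fun j _ => ?_
              rw [this j, smul_comm]
          _ = F lam • h := by rw [sum_counit_smul r]


lemma exists_nonzero_lint : ∃ lam : A →ₗ[k] k, lam ≠ 0 ∧ LInt lam := by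
  classical
  by_contra hne
  push_neg at hne
  have hz : ∀ f : A →ₗ[k] k, LInt f → f = 0 := by
    intro f hf
    by_contra h0
    exact (hne f h0) hf
  have hc : (Coalgebra.counit : A →ₗ[k] k) = 0 := by
    calc (Coalgebra.counit : A →ₗ[k] k)
        = ∑ i, actF ((Module.finBasis k A) i)
            (Pl (conv ((Module.finBasis k A).coord i) Coalgebra.counit)) := (Pl_expand _).symm
      _ = 0 := by
          refine Finset.sum_eq_zero fun i _ => ?_
          rw [hz (Pl _) (lint_Pl _), map_zero]
  have h1 : (1 : k) = 0 := by
    have := congrArg (fun F : A →ₗ[k] k => F 1) hc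
    simpa using this
  exact one_ne_zero h1

lemma lint_unique {l1 l2 : A →ₗ[k] k} (h1 : LInt l1) (h2 : LInt l2) (hne : l1 ≠ 0) :
    ∃ c : k, l2 = c • l1 := by
  classical
  obtain ⟨a, ha⟩ : ∃ a, l1 a ≠ 0 := by
    by_contra hc
    push_neg at hc
    exact hne (LinearMap.ext fun a => by simp [hc a])
  have hcz : ∀ f : A →ₗ[k] k, conv f (0 : A →ₗ[k] k) = 0 := fun f => (convR f).map_zero
  have hker : ∀ h : A, actF h l1 = 0 → h = 0 := by
    intro h h0
    have key := Rf_eq h1 (LinearMap.applyₗ a) h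
    rw [h0] at key
    simp only [hcz, map_zero, LinearMap.zero_apply, zero_smul, Finset.sum_const_zero] at key
    have : (LinearMap.applyₗ (R := k) a) l1 • h = (0 : A) := key.symm
    rcases smul_eq_zero.mp this with hc | hc
    · exact absurd hc (by simpa using ha)
    · exact hc
  have hinj : Function.Injective (actE l1) := by
    rw [← LinearMap.ker_eq_bot]
    exact LinearMap.ker_eq_bot'.mpr fun h hh => hker h hh
  have hdim : Module.finrank k A = Module.finrank k (A →ₗ[k] k) :=
    (Subspace.dual_finrank_eq (K := k) (V := A)).symm
  have hsurj : Function.Surjective (actE l1) :=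
    (LinearMap.injective_iff_surjective_of_finrank_eq_finrank hdim).mp hinj
  obtain ⟨h0, hh0⟩ := hsurj l2
  have hact : actF h0 l1 = l2 := hh0
  have key := Rf_eq h1 (LinearMap.applyₗ a) h0
  rw [hact] at key
  have hterm : ∀ i : Fin (Module.finrank k A),
      (LinearMap.applyₗ (R := k) a) (Pl (conv ((Module.finBasis k A).coord i) l2))
        = (Module.finBasis k A).coord i 1 * l2 a := by
    intro i
    rw [h2 ((Module.finBasis k A).coord i), map_smul, Pl_int h2]
    simp [smul_eq_mul, mul_comm]
  have hLHS : (∑ i, (LinearMap.applyₗ (R := k) a)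
      (Pl (conv ((Module.finBasis k A).coord i) l2)) • (Module.finBasis k A) i)
      = l2 a • (1 : A) := by
    rw [show (l2 a • (1 : A))
        = l2 a • ∑ i, (Module.finBasis k A).coord i 1 • (Module.finBasis k A) i by
      rw [show (∑ i, (Module.finBasis k A).coord i 1 • (Module.finBasis k A) i) = (1 : A) by
        simp only [Basis.coord_apply]
        exact (Module.finBasis k A).sum_repr 1]]
    rw [Finset.smul_sum]
    refine Finset.sum_congr rfl fun i _ => ?_
    rw [hterm i, smul_smul, mul_comm]
  rw [hLHS] at key
  have hh : h0 = ((l1 a)⁻¹ * l2 a) • (1 : A) := by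
    have h3 := congrArg (fun z : A => (l1 a)⁻¹ • z) key
    simpa [smul_smul, inv_mul_cancel₀ ha] using h3.symm
  refine ⟨(l1 a)⁻¹ * l2 a, ?_⟩
  conv_lhs => rw [← hact, hh]
  rw [actF_smul_left', LinearMap.smul_apply, actF_one]


lemma rid_map_eq (lam : A →ₗ[k] k) {x : A} {ι : Type*} (r : Coalgebra.Repr k x ι) :
    (TensorProduct.rid k A) ((TensorProduct.map LinearMap.id lam) (Coalgebra.comul (R := k) x))
      = ∑ i ∈ r.index, lam (r.right i) • r.left i := by
  rw [← r.eq]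
  simp [map_sum]

lemma lint_of_formula (lam : A →ₗ[k] k)
    (H : ∀ x : A, (TensorProduct.rid k A) ((TensorProduct.map LinearMap.id lam)
      (Coalgebra.comul x)) = lam x • (1 : A)) : LInt lam := by
  intro g
  ext x
  have r := ℛ k x
  have h := congrArg g ((rid_map_eq lam r).symm.trans (H x))
  simp only [map_sum, map_smul, smul_eq_mul] at h
  rw [conv_apply g lam r, LinearMap.smul_apply, smul_eq_mul]
  rw [show ∑ i ∈ r.index, g (r.left i) * lam (r.right i)
      = ∑ i ∈ r.index, lam (r.right i) * g (r.left i) from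
    Finset.sum_congr rfl fun i _ => mul_comm _ _, h, mul_comm]

lemma formula_of_lint (lam : A →ₗ[k] k) (H : LInt lam) (x : A) :
    (TensorProduct.rid k A) ((TensorProduct.map LinearMap.id lam) (Coalgebra.comul x))
      = lam x • (1 : A) := by
  have r := ℛ k x
  rw [rid_map_eq lam r]
  apply (Module.finBasis k A).ext_elem
  intro i
  have h := congrArg (fun F : A →ₗ[k] k => F x) (H ((Module.finBasis k A).coord i))
  simp only [conv_apply ((Module.finBasis k A).coord i) lam r, LinearMap.smul_apply,
    smul_eq_mul, Basis.coord_apply] at h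
  simp only [map_sum, map_smul, Finsupp.coe_finset_sum, Finset.sum_apply, Finsupp.coe_smul,
    Pi.smul_apply, smul_eq_mul]
  rw [show ∑ i_1 ∈ r.index, lam (r.right i_1) * ((Module.finBasis k A).repr (r.left i_1)) i
      = ∑ i_1 ∈ r.index, ((Module.finBasis k A).repr (r.left i_1)) i * lam (r.right i_1) from
    Finset.sum_congr rfl fun j _ => mul_comm _ _, h]
  ring

end LSaux
end LS2


/-- for a finite-dimensional Hopf algebra `A` over a field `k`, nonzero left
integrals for `A*` exist, and any two are scalar multiples of each other (the space of
left integrals for `A*` is one-dimensional). -/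
theorem left_integral_dual_exists_unique (k : Type*) (A : Type*) [Field k] [Ring A]
    [HopfAlgebra k A] [FiniteDimensional k A] :
    (∃ lam : A →ₗ[k] k, lam ≠ 0 ∧ IsLeftIntegralOnDual k A lam) ∧
    (∀ lam₁ lam₂ : A →ₗ[k] k, IsLeftIntegralOnDual k A lam₁ →
      IsLeftIntegralOnDual k A lam₂ → lam₁ ≠ 0 → ∃ c : k, lam₂ = c • lam₁) := by
  constructor
  · obtain ⟨lam, h0, hl⟩ := LSaux.exists_nonzero_lint (k := k) (A := A)
    exact ⟨lam, h0, LSaux.formula_of_lint lam hl⟩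
  · intro l1 l2 hI1 hI2 hne
    exact LSaux.lint_unique (LSaux.lint_of_formula l1 hI1) (LSaux.lint_of_formula l2 hI2) hne
end

section
/- Let ℓ > 1 be odd, ζ a primitive ℓ-th root of unity, and U_ζ the quantum group U_ζ(sl2). The element F^{ℓ-1}·π_1·E^{ℓ-1}, where π_1 = (1/ℓ)∑_{i=1}^{ℓ} ζ^{2i} K^i, is a two-sided integral for U_ζ: for all x ∈ U_ζ, x·(F^{ℓ-1}π_1E^{ℓ-1}) = ε(x)·F^{ℓ-1}π_1E^{ℓ-1} = (F^{ℓ-1}π_1E^{ℓ-1})·x. In particular U_ζ is unimodular. -/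
/-- in `U_ζ(sl2)` at a primitive `ℓ`-th root of unity `ζ` (`ℓ > 1` odd),
the element `F^{ℓ-1}·π₁·E^{ℓ-1}` with `π₁ = (1/ℓ)∑_{i=1}^{ℓ} ζ^{2i}K^i` is a two-sided
integral: `x·Λ = ε(x)·Λ = Λ·x` for all `x`. In particular `U_ζ` is unimodular. -/
theorem quantum_sl2_two_sided_integral (ℓ : ℕ) (hℓ : 1 < ℓ) (hodd : Odd ℓ) (ζ : ℂ)
    (hζ : IsPrimitiveRoot ζ ℓ)
    (A : Type*) [Ring A] [Algebra ℂ A] (K Kinv E F : A)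
    (hKinv : K * Kinv = 1 ∧ Kinv * K = 1)
    (hKl : K ^ ℓ = 1) (hEl : E ^ ℓ = 0) (hFl : F ^ ℓ = 0)
    (hKE : K * E = (ζ ^ 2 : ℂ) • (E * K))
    (hKF : K * F = (ζ⁻¹ ^ 2 : ℂ) • (F * K))
    (hEF : E * F - F * E = (ζ - ζ⁻¹)⁻¹ • (K - Kinv))
    (hgen : Algebra.adjoin ℂ ({K, E, F} : Set A) = ⊤)
    (ε : A →ₐ[ℂ] ℂ) (hεK : ε K = 1) (hεE : ε E = 0) (hεF : ε F = 0) :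
    ∀ x : A,
      x * (F ^ (ℓ - 1) * ((ℓ : ℂ)⁻¹ • ∑ i ∈ Finset.Icc 1 ℓ, (ζ ^ (2 * i) : ℂ) • K ^ i)
          * E ^ (ℓ - 1))
        = ε x • (F ^ (ℓ - 1) * ((ℓ : ℂ)⁻¹ • ∑ i ∈ Finset.Icc 1 ℓ, (ζ ^ (2 * i) : ℂ) • K ^ i)
          * E ^ (ℓ - 1)) ∧
      (F ^ (ℓ - 1) * ((ℓ : ℂ)⁻¹ • ∑ i ∈ Finset.Icc 1 ℓ, (ζ ^ (2 * i) : ℂ) • K ^ i)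
          * E ^ (ℓ - 1)) * x
        = ε x • (F ^ (ℓ - 1) * ((ℓ : ℂ)⁻¹ • ∑ i ∈ Finset.Icc 1 ℓ, (ζ ^ (2 * i) : ℂ) • K ^ i)
          * E ^ (ℓ - 1)) := by
  obtain ⟨hK1, hK2⟩ := hKinv
  obtain ⟨m, rfl⟩ : ∃ m, ℓ = m + 2 := ⟨ℓ - 2, by omega⟩
  simp only [show m + 2 - 1 = m + 1 from rfl]
  have hζ0 : ζ ≠ 0 := hζ.ne_zero (by omega)
  have hζl : ζ ^ (m + 2) = 1 := hζ.pow_eq_one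
  have hu : ζ * ζ⁻¹ = 1 := mul_inv_cancel₀ hζ0
  have hu' : ζ⁻¹ * ζ = 1 := inv_mul_cancel₀ hζ0
  have hinv2 : (ζ⁻¹ : ℂ) ^ 2 * ζ ^ 2 = 1 := by rw [← mul_pow, hu', one_pow]
  have h2inv : (ζ : ℂ) ^ 2 * ζ⁻¹ ^ 2 = 1 := by rw [← mul_pow, hu, one_pow]
  have hcop : Nat.Coprime 2 (m + 2) :=
    Nat.prime_two.coprime_iff_not_dvd.mpr (by simpa using hodd.not_two_dvd_nat)
  have hζ2 : IsPrimitiveRoot (ζ ^ 2) (m + 2) := hζ.pow_of_coprime 2 hcop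
  have hζi2 : IsPrimitiveRoot ((ζ⁻¹ : ℂ) ^ 2) (m + 2) := hζ.inv.pow_of_coprime 2 hcop
  -- powers of ζ of exponent 2(m+2) are 1
  have hz2l : (ζ : ℂ) ^ (2 * (m + 2)) = 1 := by
    rw [mul_comm 2 (m + 2), pow_mul, hζl, one_pow]
  have hzi2l : (ζ⁻¹ : ℂ) ^ (2 * (m + 2)) = 1 := by
    rw [inv_pow, hz2l, inv_one]
  have hz1 : (ζ : ℂ) ^ (2 * (m + 1)) * ζ ^ 2 = 1 := by
    rw [← pow_add, show 2 * (m + 1) + 2 = 2 * (m + 2) by ring, hz2l]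
  have hzi1 : (ζ⁻¹ : ℂ) ^ (2 * (m + 1)) * ζ⁻¹ ^ 2 = 1 := by
    rw [← pow_add, show 2 * (m + 1) + 2 = 2 * (m + 2) by ring, hzi2l]
  set lam : ℂ := (ζ - ζ⁻¹)⁻¹ with hlam
  -- geometric sums
  have hSp : ∑ j ∈ Finset.range (m + 2), (ζ : ℂ) ^ (2 * j) = 0 := by
    have h := hζ2.geom_sum_eq_zero hℓ
    simpa [pow_mul] using h
  have hSm : ∑ j ∈ Finset.range (m + 2), (ζ⁻¹ : ℂ) ^ (2 * j) = 0 := by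
    have h := hζi2.geom_sum_eq_zero hℓ
    simpa [pow_mul] using h
  have hSp1 : ∑ j ∈ Finset.range (m + 1), (ζ : ℂ) ^ (2 * j) = -ζ ^ (2 * (m + 1)) := by
    have h := Finset.sum_range_succ (fun j => (ζ : ℂ) ^ (2 * j)) (m + 1)
    rw [hSp] at h
    linear_combination -h
  have hSm1 : ∑ j ∈ Finset.range (m + 1), (ζ⁻¹ : ℂ) ^ (2 * j) = -ζ⁻¹ ^ (2 * (m + 1)) := by
    have h := Finset.sum_range_succ (fun j => (ζ⁻¹ : ℂ) ^ (2 * j)) (m + 1)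
    rw [hSm] at h
    linear_combination -h
  -- geometric sum recursion
  have hSrec : ∀ (w : ℂ) (n : ℕ), ∑ j ∈ Finset.range (n + 1 + 1), w ^ (2 * j)
      = (∑ j ∈ Finset.range (n + 1), w ^ (2 * j)) * w ^ 2 + 1 := by
    intro w n
    rw [Finset.sum_range_succ' (fun j => w ^ (2 * j)), Finset.sum_mul]
    simp only [mul_zero, pow_zero]
    congr 1
    refine Finset.sum_congr rfl fun j _ => ?_
    rw [show 2 * (j + 1) = 2 * j + 2 from by ring, pow_add]
  -- the key vanishing scalar
  have hkey : lam * (∑ j ∈ Finset.range (m + 1), (ζ⁻¹ : ℂ) ^ (2 * j)) * ζ⁻¹ ^ 2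
      - lam * (∑ j ∈ Finset.range (m + 1), (ζ : ℂ) ^ (2 * j)) * ζ ^ 2 = 0 := by
    rw [hSp1, hSm1]
    linear_combination (-lam) * hzi1 + lam * hz1
  -- basic single commutations
  have hEK : E * K = (ζ⁻¹ ^ 2 : ℂ) • (K * E) := by
    rw [hKE, smul_smul, hinv2, one_smul]
  have hFK : F * K = (ζ ^ 2 : ℂ) • (K * F) := by
    rw [hKF, smul_smul, h2inv, one_smul]
  have hEKinv : E * Kinv = (ζ ^ 2 : ℂ) • (Kinv * E) := by
    have h : E * Kinv = Kinv * (K * E) * Kinv := by rw [← mul_assoc, hK2, one_mul]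
    rw [h, hKE, mul_smul_comm, smul_mul_assoc, mul_assoc, mul_assoc, hK1, mul_one]
  have hKinvF : Kinv * F = (ζ ^ 2 : ℂ) • (F * Kinv) := by
    have h : Kinv * F = Kinv * (F * K) * Kinv := by
      rw [mul_assoc, mul_assoc, hK1, mul_one]
    rw [h, hFK, mul_smul_comm, smul_mul_assoc, ← mul_assoc, hK2, one_mul]
  -- commutations with powers of K
  have hEKn : ∀ i, E * K ^ i = ((ζ⁻¹ : ℂ) ^ (2 * i)) • (K ^ i * E) := by
    intro i; induction i with
    | zero => simp
    | succ n ih =>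
      calc E * K ^ (n + 1) = (E * K ^ n) * K := by rw [pow_succ, ← mul_assoc]
        _ = ((ζ⁻¹ : ℂ) ^ (2 * n)) • (K ^ n * (E * K)) := by
            rw [ih, smul_mul_assoc, mul_assoc]
        _ = ((ζ⁻¹ : ℂ) ^ (2 * n) * ζ⁻¹ ^ 2) • (K ^ (n + 1) * E) := by
            rw [hEK, mul_smul_comm, smul_smul, ← mul_assoc, ← pow_succ]
        _ = ((ζ⁻¹ : ℂ) ^ (2 * (n + 1))) • (K ^ (n + 1) * E) := by
            rw [show 2 * (n + 1) = 2 * n + 2 from by ring, pow_add (ζ⁻¹) (2 * n) 2]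
  have hKnF : ∀ i, K ^ i * F = ((ζ⁻¹ : ℂ) ^ (2 * i)) • (F * K ^ i) := by
    intro i; induction i with
    | zero => simp
    | succ n ih =>
      calc K ^ (n + 1) * F = K * (K ^ n * F) := by rw [pow_succ', mul_assoc]
        _ = ((ζ⁻¹ : ℂ) ^ (2 * n)) • ((K * F) * K ^ n) := by
            rw [ih, mul_smul_comm, ← mul_assoc]
        _ = ((ζ⁻¹ : ℂ) ^ (2 * n) * ζ⁻¹ ^ 2) • (F * K ^ (n + 1)) := by
            rw [hKF, smul_mul_assoc, smul_smul, mul_assoc, ← pow_succ']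
        _ = ((ζ⁻¹ : ℂ) ^ (2 * (n + 1))) • (F * K ^ (n + 1)) := by
            rw [show 2 * (n + 1) = 2 * n + 2 from by ring, pow_add (ζ⁻¹) (2 * n) 2]
  have hKFn : ∀ n, K * F ^ n = ((ζ⁻¹ : ℂ) ^ (2 * n)) • (F ^ n * K) := by
    intro n; induction n with
    | zero => simp
    | succ n ih =>
      calc K * F ^ (n + 1) = (K * F ^ n) * F := by rw [pow_succ, ← mul_assoc]
        _ = ((ζ⁻¹ : ℂ) ^ (2 * n)) • (F ^ n * (K * F)) := by
            rw [ih, smul_mul_assoc, mul_assoc]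
        _ = ((ζ⁻¹ : ℂ) ^ (2 * n) * ζ⁻¹ ^ 2) • (F ^ (n + 1) * K) := by
            rw [hKF, mul_smul_comm, smul_smul, ← mul_assoc, ← pow_succ]
        _ = ((ζ⁻¹ : ℂ) ^ (2 * (n + 1))) • (F ^ (n + 1) * K) := by
            rw [show 2 * (n + 1) = 2 * n + 2 from by ring, pow_add (ζ⁻¹) (2 * n) 2]
  have hEnK : ∀ n, E ^ n * K = ((ζ⁻¹ : ℂ) ^ (2 * n)) • (K * E ^ n) := by
    intro n; induction n with
    | zero => simp
    | succ n ih =>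
      calc E ^ (n + 1) * K = E * (E ^ n * K) := by rw [pow_succ', mul_assoc]
        _ = ((ζ⁻¹ : ℂ) ^ (2 * n)) • ((E * K) * E ^ n) := by
            rw [ih, mul_smul_comm, ← mul_assoc]
        _ = ((ζ⁻¹ : ℂ) ^ (2 * n) * ζ⁻¹ ^ 2) • (K * E ^ (n + 1)) := by
            rw [hEK, smul_mul_assoc, smul_smul, mul_assoc, ← pow_succ']
        _ = ((ζ⁻¹ : ℂ) ^ (2 * (n + 1))) • (K * E ^ (n + 1)) := by
            rw [show 2 * (n + 1) = 2 * n + 2 from by ring, pow_add (ζ⁻¹) (2 * n) 2]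
  -- sum reindexing tools
  have hIcc : ∀ g : ℕ → A, ∑ i ∈ Finset.Icc 1 (m + 2), g i
      = ∑ i ∈ Finset.range (m + 2), g (i + 1) := by
    intro g
    rw [← Finset.Ico_add_one_right_eq_Icc, Finset.sum_Ico_eq_sum_range]
    simp [add_comm]
  have hshift : ∀ g : ℕ → A, g (m + 2) = g 0 →
      ∑ i ∈ Finset.range (m + 2), g (i + 1) = ∑ i ∈ Finset.range (m + 2), g i := by
    intro g hg
    have h1 := Finset.sum_range_succ' g (m + 2)
    have h2 := Finset.sum_range_succ g (m + 2)
    rw [hg] at h2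
    exact add_right_cancel (h1.symm.trans h2)
  have hf1 : (ζ ^ (2 * (m + 2 + 1)) : ℂ) • K ^ (m + 2 + 1) = (ζ ^ (2 * (0 + 1)) : ℂ) • K ^ (0 + 1) := by
    rw [pow_succ' K, hKl, mul_one,
      show 2 * (m + 2 + 1) = 2 * (m + 2) + 2 * 1 from by ring, pow_add, hz2l, one_mul]
    norm_num
  have hcore : (∑ i ∈ Finset.Icc 1 (m + 2), (ζ ^ (2 * (i + 1)) : ℂ) • K ^ (i + 1))
      = ∑ i ∈ Finset.Icc 1 (m + 2), (ζ ^ (2 * i) : ℂ) • K ^ i := by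
    calc (∑ i ∈ Finset.Icc 1 (m + 2), (ζ ^ (2 * (i + 1)) : ℂ) • K ^ (i + 1))
        = ∑ i ∈ Finset.range (m + 2), (ζ ^ (2 * (i + 1 + 1)) : ℂ) • K ^ (i + 1 + 1) :=
          hIcc (fun i => (ζ ^ (2 * (i + 1)) : ℂ) • K ^ (i + 1))
      _ = ∑ i ∈ Finset.range (m + 2), (ζ ^ (2 * (i + 1)) : ℂ) • K ^ (i + 1) :=
          hshift (fun i => (ζ ^ (2 * (i + 1)) : ℂ) • K ^ (i + 1)) hf1
      _ = ∑ i ∈ Finset.Icc 1 (m + 2), (ζ ^ (2 * i) : ℂ) • K ^ i :=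
          (hIcc (fun i => (ζ ^ (2 * i) : ℂ) • K ^ i)).symm
  set π : A := (↑(m + 2) : ℂ)⁻¹ • ∑ i ∈ Finset.Icc 1 (m + 2), (ζ ^ (2 * i) : ℂ) • K ^ i with hπdef
  -- K and Kinv absorb into π
  have hKsum : K * (∑ i ∈ Finset.Icc 1 (m + 2), (ζ ^ (2 * i) : ℂ) • K ^ i)
      = ((ζ⁻¹ : ℂ) ^ 2) • ∑ i ∈ Finset.Icc 1 (m + 2), (ζ ^ (2 * i) : ℂ) • K ^ i := by
    rw [Finset.mul_sum, ← hcore, Finset.smul_sum]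
    refine Finset.sum_congr rfl fun i _ => ?_
    rw [mul_smul_comm, ← pow_succ', smul_smul,
      show 2 * (i + 1) = 2 * i + 2 from by ring, pow_add (ζ) (2 * i) 2,
      ← mul_assoc, mul_comm ((ζ⁻¹ : ℂ) ^ 2), mul_assoc, hinv2, mul_one]
  have hsumK : (∑ i ∈ Finset.Icc 1 (m + 2), (ζ ^ (2 * i) : ℂ) • K ^ i) * K
      = ((ζ⁻¹ : ℂ) ^ 2) • ∑ i ∈ Finset.Icc 1 (m + 2), (ζ ^ (2 * i) : ℂ) • K ^ i := by
    rw [Finset.sum_mul, ← hcore, Finset.smul_sum]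
    refine Finset.sum_congr rfl fun i _ => ?_
    rw [smul_mul_assoc, ← pow_succ, smul_smul,
      show 2 * (i + 1) = 2 * i + 2 from by ring, pow_add (ζ) (2 * i) 2,
      ← mul_assoc, mul_comm ((ζ⁻¹ : ℂ) ^ 2), mul_assoc, hinv2, mul_one]
  have hKπ : K * π = ((ζ⁻¹ : ℂ) ^ 2) • π := by
    rw [hπdef, mul_smul_comm, hKsum, smul_comm]
  have hπK : π * K = ((ζ⁻¹ : ℂ) ^ 2) • π := by
    rw [hπdef, smul_mul_assoc, hsumK, smul_comm]
  have hKπ' : ((ζ : ℂ) ^ 2) • (K * π) = π := by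
    rw [hKπ, smul_smul, h2inv, one_smul]
  have hπK' : ((ζ : ℂ) ^ 2) • (π * K) = π := by
    rw [hπK, smul_smul, h2inv, one_smul]
  have hKinvπ : Kinv * π = ((ζ : ℂ) ^ 2) • π := by
    calc Kinv * π = Kinv * (((ζ : ℂ) ^ 2) • (K * π)) := by rw [hKπ']
      _ = ((ζ : ℂ) ^ 2) • (Kinv * (K * π)) := by rw [mul_smul_comm]
      _ = ((ζ : ℂ) ^ 2) • π := by rw [← mul_assoc, hK2, one_mul]
  have hπKinv : π * Kinv = ((ζ : ℂ) ^ 2) • π := by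
    calc π * Kinv = (((ζ : ℂ) ^ 2) • (π * K)) * Kinv := by rw [hπK']
      _ = ((ζ : ℂ) ^ 2) • (π * (K * Kinv)) := by rw [smul_mul_assoc, mul_assoc]
      _ = ((ζ : ℂ) ^ 2) • π := by rw [hK1, mul_one]
  -- E and F move across π
  have hEπ : E * π = ((↑(m + 2) : ℂ)⁻¹ • ∑ i ∈ Finset.Icc 1 (m + 2), K ^ i) * E := by
    rw [hπdef, mul_smul_comm, smul_mul_assoc]
    congr 1
    rw [Finset.mul_sum, Finset.sum_mul]
    refine Finset.sum_congr rfl fun i _ => ?_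
    rw [mul_smul_comm, hEKn i, smul_smul, ← mul_pow, hu, one_pow, one_smul]
  have hπF : π * F = F * ((↑(m + 2) : ℂ)⁻¹ • ∑ i ∈ Finset.Icc 1 (m + 2), K ^ i) := by
    rw [hπdef, smul_mul_assoc, mul_smul_comm]
    congr 1
    rw [Finset.sum_mul, Finset.mul_sum]
    refine Finset.sum_congr rfl fun i _ => ?_
    rw [smul_mul_assoc, hKnF i, smul_smul, ← mul_pow, hu, one_pow, one_smul]
  -- splitting helpers
  have hsplitR : ∀ (x : A) (r s : ℂ), x * (r • K - s • Kinv) = r • (x * K) - s • (x * Kinv) := by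
    intro x r s
    rw [mul_sub, mul_smul_comm, mul_smul_comm]
  have hsplitL : ∀ (x : A) (r s : ℂ), (r • K - s • Kinv) * x = r • (K * x) - s • (Kinv * x) := by
    intro x r s
    rw [sub_mul, smul_mul_assoc, smul_mul_assoc]
  have hEFe : E * F = F * E + (lam • K - lam • Kinv) := by
    rw [← smul_sub, ← hEF]
    abel
  -- scalar recursions
  have hrec : ∀ (w : ℂ) (n : ℕ), lam * ∑ j ∈ Finset.range (n + 1 + 1), w ^ (2 * j)
      = lam + lam * (∑ j ∈ Finset.range (n + 1), w ^ (2 * j)) * w ^ 2 := by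
    intro w n
    rw [hSrec w n]
    ring
  -- commutator formula: E past powers of F
  have hC1 : ∀ n, E * F ^ (n + 1) = F ^ (n + 1) * E + F ^ n *
      ((lam * ∑ j ∈ Finset.range (n + 1), (ζ⁻¹ : ℂ) ^ (2 * j)) • K
        - (lam * ∑ j ∈ Finset.range (n + 1), (ζ : ℂ) ^ (2 * j)) • Kinv) := by
    intro n; induction n with
    | zero =>
      simpa [mul_one] using hEFe
    | succ n ih =>
      calc E * F ^ (n + 1 + 1)
          = (E * F ^ (n + 1)) * F := by rw [pow_succ, ← mul_assoc]
        _ = F ^ (n + 1) * (E * F) + F ^ n *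
            (((lam * ∑ j ∈ Finset.range (n + 1), (ζ⁻¹ : ℂ) ^ (2 * j)) • K
              - (lam * ∑ j ∈ Finset.range (n + 1), (ζ : ℂ) ^ (2 * j)) • Kinv) * F) := by
            rw [ih, add_mul, mul_assoc, mul_assoc]
        _ = F ^ (n + 1) * (F * E) + (lam • (F ^ (n + 1) * K) - lam • (F ^ (n + 1) * Kinv))
            + ((lam * (∑ j ∈ Finset.range (n + 1), (ζ⁻¹ : ℂ) ^ (2 * j)) * ζ⁻¹ ^ 2) • (F ^ n * (F * K))
              - (lam * (∑ j ∈ Finset.range (n + 1), (ζ : ℂ) ^ (2 * j)) * ζ ^ 2) • (F ^ n * (F * Kinv))) := by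
            rw [hEFe, mul_add, hsplitR, hsplitL, hKF, hKinvF, mul_sub,
              mul_smul_comm, mul_smul_comm, smul_smul, smul_smul, add_assoc]
            simp only [mul_smul_comm, smul_mul_assoc, smul_smul]
            abel
        _ = F ^ (n + 1 + 1) * E
            + ((lam + lam * (∑ j ∈ Finset.range (n + 1), (ζ⁻¹ : ℂ) ^ (2 * j)) * ζ⁻¹ ^ 2) • (F ^ (n + 1) * K)
              - (lam + lam * (∑ j ∈ Finset.range (n + 1), (ζ : ℂ) ^ (2 * j)) * ζ ^ 2) • (F ^ (n + 1) * Kinv)) := by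
            rw [← mul_assoc, ← pow_succ, ← mul_assoc (F ^ n) F Kinv, ← pow_succ,
              ← mul_assoc (F ^ n) F K, ← pow_succ, add_smul, add_smul]
            abel
        _ = F ^ (n + 1 + 1) * E + F ^ (n + 1) *
            ((lam * ∑ j ∈ Finset.range (n + 1 + 1), (ζ⁻¹ : ℂ) ^ (2 * j)) • K
              - (lam * ∑ j ∈ Finset.range (n + 1 + 1), (ζ : ℂ) ^ (2 * j)) • Kinv) := by
            rw [hsplitR, hrec ζ n, hrec ζ⁻¹ n]
  -- commutator formula: F past powers of E
  have hC2 : ∀ n, E ^ (n + 1) * F = F * E ^ (n + 1) +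
      ((lam * ∑ j ∈ Finset.range (n + 1), (ζ⁻¹ : ℂ) ^ (2 * j)) • K
        - (lam * ∑ j ∈ Finset.range (n + 1), (ζ : ℂ) ^ (2 * j)) • Kinv) * E ^ n := by
    intro n; induction n with
    | zero =>
      simpa [mul_one] using hEFe
    | succ n ih =>
      calc E ^ (n + 1 + 1) * F
          = E * (E ^ (n + 1) * F) := by rw [pow_succ', mul_assoc]
        _ = (E * F) * E ^ (n + 1) + (E *
            (((lam * ∑ j ∈ Finset.range (n + 1), (ζ⁻¹ : ℂ) ^ (2 * j)) • K
              - (lam * ∑ j ∈ Finset.range (n + 1), (ζ : ℂ) ^ (2 * j)) • Kinv))) * E ^ n := by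
            rw [ih, mul_add, ← mul_assoc, ← mul_assoc]
        _ = (F * E) * E ^ (n + 1) + (lam • (K * E ^ (n + 1)) - lam • (Kinv * E ^ (n + 1)))
            + ((lam * (∑ j ∈ Finset.range (n + 1), (ζ⁻¹ : ℂ) ^ (2 * j)) * ζ⁻¹ ^ 2) • ((K * E) * E ^ n)
              - (lam * (∑ j ∈ Finset.range (n + 1), (ζ : ℂ) ^ (2 * j)) * ζ ^ 2) • ((Kinv * E) * E ^ n)) := by
            rw [hEFe, add_mul, hsplitL, hsplitR, hEK, hEKinv, sub_mul,
              smul_mul_assoc, smul_mul_assoc, smul_smul, smul_smul, add_assoc]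
            simp only [mul_smul_comm, smul_mul_assoc, smul_smul]
            abel
        _ = F * E ^ (n + 1 + 1)
            + ((lam + lam * (∑ j ∈ Finset.range (n + 1), (ζ⁻¹ : ℂ) ^ (2 * j)) * ζ⁻¹ ^ 2) • (K * E ^ (n + 1))
              - (lam + lam * (∑ j ∈ Finset.range (n + 1), (ζ : ℂ) ^ (2 * j)) * ζ ^ 2) • (Kinv * E ^ (n + 1))) := by
            rw [mul_assoc F, ← pow_succ', mul_assoc K, ← pow_succ', mul_assoc Kinv, ← pow_succ',
              add_smul, add_smul]
            abel
        _ = F * E ^ (n + 1 + 1) +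
            ((lam * ∑ j ∈ Finset.range (n + 1 + 1), (ζ⁻¹ : ℂ) ^ (2 * j)) • K
              - (lam * ∑ j ∈ Finset.range (n + 1 + 1), (ζ : ℂ) ^ (2 * j)) • Kinv) * E ^ (n + 1) := by
            rw [hsplitL, hrec ζ n, hrec ζ⁻¹ n]
  clear_value π
  set Δ : A := (lam * ∑ j ∈ Finset.range (m + 1), (ζ⁻¹ : ℂ) ^ (2 * j)) • K
      - (lam * ∑ j ∈ Finset.range (m + 1), (ζ : ℂ) ^ (2 * j)) • Kinv with hΔ
  have hmix : Δ * π = 0 := by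
    rw [hΔ, hsplitL, hKπ, hKinvπ, smul_smul, smul_smul, ← sub_smul, hkey, zero_smul]
  have hmix' : π * Δ = 0 := by
    rw [hΔ, hsplitR, hπK, hπKinv, smul_smul, smul_smul, ← sub_smul, hkey, zero_smul]
  clear_value Δ
  set Λ : A := F ^ (m + 1) * π * E ^ (m + 1) with hΛ
  clear_value Λ
  have hEΛ : E * Λ = 0 := by
    have t1 : F ^ (m + 1) * E * π * E ^ (m + 1) = 0 := by
      calc F ^ (m + 1) * E * π * E ^ (m + 1)
          = F ^ (m + 1) * ((E * π) * E ^ (m + 1)) := by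
            rw [mul_assoc (F ^ (m + 1)) E π, mul_assoc]
        _ = F ^ (m + 1) * (((↑(m + 2) : ℂ)⁻¹ • ∑ i ∈ Finset.Icc 1 (m + 2), K ^ i)
              * (E * E ^ (m + 1))) := by rw [hEπ, mul_assoc]
        _ = 0 := by
            rw [← pow_succ', show m + 1 + 1 = m + 2 from rfl, hEl, mul_zero, mul_zero]
    have t2 : F ^ m * Δ * π * E ^ (m + 1) = 0 := by
      rw [mul_assoc (F ^ m) Δ π, hmix, mul_zero, zero_mul]
    calc E * Λ = (E * F ^ (m + 1)) * π * E ^ (m + 1) := by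
          rw [hΛ, ← mul_assoc, ← mul_assoc]
      _ = F ^ (m + 1) * E * π * E ^ (m + 1) + F ^ m * Δ * π * E ^ (m + 1) := by
          rw [hC1 m, ← hΔ, add_mul, add_mul]
      _ = 0 := by rw [t1, t2, add_zero]
  have hΛE : Λ * E = 0 := by
    rw [hΛ, mul_assoc, ← pow_succ, show m + 1 + 1 = m + 2 from rfl, hEl, mul_zero]
  have hFΛ : F * Λ = 0 := by
    rw [hΛ, ← mul_assoc, ← mul_assoc, ← pow_succ', show m + 1 + 1 = m + 2 from rfl, hFl,
      zero_mul, zero_mul]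
  have hΛF : Λ * F = 0 := by
    have t1 : (F ^ (m + 1) * π) * (F * E ^ (m + 1)) = 0 := by
      calc (F ^ (m + 1) * π) * (F * E ^ (m + 1))
          = (F ^ (m + 1) * (π * F)) * E ^ (m + 1) := by
            rw [← mul_assoc, mul_assoc (F ^ (m + 1)) π F]
        _ = ((F ^ (m + 1) * F) * ((↑(m + 2) : ℂ)⁻¹ • ∑ i ∈ Finset.Icc 1 (m + 2), K ^ i))
              * E ^ (m + 1) := by rw [hπF, ← mul_assoc]
        _ = 0 := by
            rw [← pow_succ, show m + 1 + 1 = m + 2 from rfl, hFl, zero_mul, zero_mul]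
    have t2 : (F ^ (m + 1) * π) * (Δ * E ^ m) = 0 := by
      rw [← mul_assoc, mul_assoc (F ^ (m + 1)) π Δ, hmix', mul_zero, zero_mul]
    calc Λ * F = (F ^ (m + 1) * π) * (E ^ (m + 1) * F) := by rw [hΛ, mul_assoc]
      _ = (F ^ (m + 1) * π) * (F * E ^ (m + 1)) + (F ^ (m + 1) * π) * (Δ * E ^ m) := by
          rw [hC2 m, ← hΔ, mul_add]
      _ = 0 := by rw [t1, t2, add_zero]
  have hKΛ : K * Λ = Λ := by
    calc K * Λ = ((K * F ^ (m + 1)) * π) * E ^ (m + 1) := by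
          rw [hΛ, ← mul_assoc, ← mul_assoc]
      _ = ((ζ⁻¹ : ℂ) ^ (2 * (m + 1))) • ((F ^ (m + 1) * (K * π)) * E ^ (m + 1)) := by
          rw [hKFn (m + 1), smul_mul_assoc, smul_mul_assoc, mul_assoc (F ^ (m + 1)) K π]
      _ = ((ζ⁻¹ : ℂ) ^ (2 * (m + 1)) * ζ⁻¹ ^ 2) • Λ := by
          rw [hKπ, mul_smul_comm, smul_mul_assoc, smul_smul, hΛ]
      _ = Λ := by rw [hzi1, one_smul]
  have hΛK : Λ * K = Λ := by
    calc Λ * K = (F ^ (m + 1) * π) * (E ^ (m + 1) * K) := by rw [hΛ, mul_assoc]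
      _ = ((ζ⁻¹ : ℂ) ^ (2 * (m + 1))) • ((F ^ (m + 1) * (π * K)) * E ^ (m + 1)) := by
          rw [hEnK (m + 1), mul_smul_comm, ← mul_assoc, mul_assoc (F ^ (m + 1)) π K]
      _ = ((ζ⁻¹ : ℂ) ^ (2 * (m + 1)) * ζ⁻¹ ^ 2) • Λ := by
          rw [hπK, mul_smul_comm, smul_mul_assoc, smul_smul, hΛ]
      _ = Λ := by rw [hzi1, one_smul]
  have main : ∀ x ∈ Algebra.adjoin ℂ ({K, E, F} : Set A),
      x * Λ = ε x • Λ ∧ Λ * x = ε x • Λ := by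
    intro x hx
    induction hx using Algebra.adjoin_induction with
    | mem y hy =>
      simp only [Set.mem_insert_iff, Set.mem_singleton_iff] at hy
      rcases hy with rfl | rfl | rfl
      · exact ⟨by rw [hKΛ, hεK, one_smul], by rw [hΛK, hεK, one_smul]⟩
      · exact ⟨by rw [hEΛ, hεE, zero_smul], by rw [hΛE, hεE, zero_smul]⟩
      · exact ⟨by rw [hFΛ, hεF, zero_smul], by rw [hΛF, hεF, zero_smul]⟩
    | algebraMap r =>
      constructor
      · rw [← Algebra.smul_def]
        congr 1
        simp
      · rw [← Algebra.commutes, ← Algebra.smul_def]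
        congr 1
        simp
    | add x y hx hy ihx ihy =>
      exact ⟨by rw [add_mul, ihx.1, ihy.1, map_add, add_smul],
             by rw [mul_add, ihx.2, ihy.2, map_add, add_smul]⟩
    | mul x y hx hy ihx ihy =>
      constructor
      · rw [mul_assoc, ihy.1, mul_smul_comm, ihx.1, smul_smul, map_mul, mul_comm (ε x) (ε y)]
      · rw [← mul_assoc, ihx.2, smul_mul_assoc, ihy.2, smul_smul, map_mul]
  intro x
  have hx : x ∈ Algebra.adjoin ℂ ({K, E, F} : Set A) := by
    rw [hgen]; exact Algebra.mem_top
  exact main x hx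
end

section
/- Gauss-sum nonvanishing: Let ℓ > 1 be odd, ζ a primitive ℓ-th root of unity, [m] = (ζ^m−ζ^{-m})/(ζ−ζ^{-1}). Then ∑_{i=0}^{(ℓ-3)/2} ζ^{2i(i+1)}[2i+1]² ≠ 0. -/
lemma aux_gauss_key (ℓ : ℕ) [NeZero ℓ] (hℓ : 1 < ℓ) (hodd : Odd ℓ) (τ : ℂ) (hτ : IsPrimitiveRoot τ ℓ) :
    ∑ a : ZMod ℓ, τ ^ (a * a + a).val ≠ 0 := by
  have h1 : τ ^ ℓ = 1 := hτ.pow_eq_one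
  set ψ : AddChar (ZMod ℓ) ℂ := AddChar.zmodChar ℓ h1 with hψdef
  have hψa : ∀ a : ZMod ℓ, ψ a = τ ^ a.val := fun a => AddChar.zmodChar_apply h1 a
  have hprim : ψ.IsPrimitive := by
    exact AddChar.zmodChar_primitive_of_primitive_root ℓ hτ
  have h2 : IsUnit (2 : ZMod ℓ) := by
    have hc : Nat.Coprime 2 ℓ := Nat.coprime_two_left.mpr hodd
    have := (ZMod.unitOfCoprime 2 hc).isUnit
    rwa [ZMod.coe_unitOfCoprime, Nat.cast_ofNat] at this
  have key : (∑ a : ZMod ℓ, ψ (a*a+a)) * (∑ b : ZMod ℓ, ψ (-(b*b+b))) = (ℓ : ℂ) := by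
    rw [Finset.sum_mul_sum, Finset.sum_comm]
    have step : ∀ b : ZMod ℓ, ∑ a : ZMod ℓ, ψ (a*a+a) * ψ (-(b*b+b))
        = ∑ t : ZMod ℓ, ψ (t*t+t) * ψ (t*(2*b)) := by
      intro b
      rw [← Equiv.sum_comp (Equiv.addRight b) (fun a => ψ (a*a+a) * ψ (-(b*b+b)))]
      refine Finset.sum_congr rfl fun t _ => ?_
      simp only [Equiv.coe_addRight]
      rw [← AddChar.map_add_eq_mul, ← AddChar.map_add_eq_mul]
      congr 1
      ring
    calc ∑ b : ZMod ℓ, ∑ a : ZMod ℓ, ψ (a*a+a) * ψ (-(b*b+b))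
        = ∑ b : ZMod ℓ, ∑ t : ZMod ℓ, ψ (t*t+t) * ψ (t*(2*b)) := by
          exact Finset.sum_congr rfl fun b _ => step b
      _ = ∑ t : ZMod ℓ, ∑ b : ZMod ℓ, ψ (t*t+t) * ψ (b*(2*t)) := by
          rw [Finset.sum_comm]
          refine Finset.sum_congr rfl fun t _ => Finset.sum_congr rfl fun b _ => ?_
          congr 2
          ring
      _ = ∑ t : ZMod ℓ, ψ (t*t+t) * (if 2*t = 0 then (Fintype.card (ZMod ℓ) : ℂ) else 0) := by
          refine Finset.sum_congr rfl fun t _ => ?_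
          rw [← Finset.mul_sum, AddChar.sum_mulShift _ hprim]
          rw [Nat.cast_ite, Nat.cast_zero]
      _ = (ℓ : ℂ) := by
          rw [Finset.sum_eq_single 0]
          · simp [AddChar.map_zero_eq_one, ZMod.card]
          · intro t _ ht
            rw [if_neg, mul_zero]
            rw [h2.mul_right_eq_zero]
            exact ht
          · simp
  intro h
  have h0 : (∑ a : ZMod ℓ, ψ (a*a+a)) = 0 := by
    rw [← h]
    exact Finset.sum_congr rfl fun a _ => hψa _
  rw [h0, zero_mul] at key
  exact (Nat.cast_ne_zero.mpr (by omega : ℓ ≠ 0)) key.symm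

/-- Gauss-sum nonvanishing: for odd `ℓ > 1` and `ζ` a primitive `ℓ`-th
root of unity, `∑_{i=0}^{(ℓ-3)/2} ζ^{2i(i+1)}[2i+1]² ≠ 0`. -/
theorem gauss_sum_ne_zero (ℓ : ℕ) (hℓ : 1 < ℓ) (hodd : Odd ℓ) (ζ : ℂ)
    (hζ : IsPrimitiveRoot ζ ℓ) :
    ∑ i ∈ Finset.range ((ℓ - 3) / 2 + 1),
      ζ ^ (2 * i * (i + 1)) * (qInt ζ (2 * i + 1)) ^ 2 ≠ 0 := by
  obtain ⟨n, hn⟩ : ∃ n, ℓ = 2*n+1 := by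
    obtain ⟨k, hk⟩ := hodd; exact ⟨k, by omega⟩
  have hn1 : 1 ≤ n := by omega
  have hrange : (ℓ - 3) / 2 + 1 = n := by omega
  rw [hrange]
  have hζ0 : ζ ≠ 0 := hζ.ne_zero (by omega)
  set f : ℤ → ℂ := fun k => ζ ^ (2*k) with hf
  set g : ℤ → ℂ := fun j => f (j^2 + j) with hg
  have hpow : ζ ^ (ℓ:ℤ) = 1 := by rw [zpow_natCast, hζ.pow_eq_one]
  have fadd : ∀ a b : ℤ, f (a+b) = f a * f b := by
    intro a b; simp only [hf]; rw [mul_add, zpow_add₀ hζ0]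
  have f0 : f 0 = 1 := by simp [hf]
  have fper : ∀ a b : ℤ, (ℓ:ℤ) ∣ a - b → f a = f b := by
    rintro a b ⟨d, hd⟩
    have hab : a = b + ℓ * d := by linarith
    rw [hab, fadd]
    have : f ((ℓ:ℤ) * d) = 1 := by
      simp only [hf]
      rw [show 2*((ℓ:ℤ)*d) = (ℓ:ℤ)*(2*d) by ring, zpow_mul, hpow, one_zpow]
    rw [this, mul_one]
  have gper : ∀ a b : ℤ, (ℓ:ℤ) ∣ (a^2+a) - (b^2+b) → g a = g b := by
    intro a b h; simp only [hg]; exact fper _ _ h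
  have hsq : ζ ^ (2:ℕ) ≠ 1 := by
    intro h
    have := Nat.le_of_dvd (by norm_num) ((hζ.pow_eq_one_iff_dvd 2).mp h)
    omega
  have hden : ζ - ζ⁻¹ ≠ 0 := by
    intro h
    apply hsq
    have h1 : ζ = ζ⁻¹ := sub_eq_zero.mp h
    calc ζ ^ (2:ℕ) = ζ * ζ := sq ζ
    _ = ζ * ζ⁻¹ := by rw [← h1]
    _ = 1 := mul_inv_cancel₀ hζ0
  have hfm1 : f (-1) - 1 ≠ 0 := by
    intro h
    apply hsq
    have h1 : f (-1) = 1 := by rwa [sub_eq_zero] at h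
    simp only [hf] at h1
    have h2 : ζ ^ ((-2 : ℤ)) = 1 := by rw [show ((-2:ℤ)) = 2 * (-1) by ring]; exact h1
    rw [zpow_neg, inv_eq_one] at h2
    rw [← zpow_natCast ζ 2]; exact_mod_cast h2
  -- per-term computation
  have term : ∀ i : ℕ, (ζ - ζ⁻¹)^2 * (ζ ^ (2*i*(i+1)) * (qInt ζ (2*i+1))^2)
      = f (-1) * g ((i:ℤ)+1) - 2 * g (i:ℤ) + f (-1) * g ((i:ℤ)-1) := by
    intro i
    have h1 : ζ^(2*(i:ℤ)+1) * ζ^(-(2*(i:ℤ)+1)) = 1 := by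
      rw [← zpow_add₀ hζ0, show (2*(i:ℤ)+1) + -(2*(i:ℤ)+1) = 0 by ring, zpow_zero]
    have h2 : ζ^(2*(i:ℤ)+1) * ζ^(2*(i:ℤ)+1) = f (2*(i:ℤ)+1) := by
      rw [← zpow_add₀ hζ0, hf]; congr 1; ring
    have h3 : ζ^(-(2*(i:ℤ)+1)) * ζ^(-(2*(i:ℤ)+1)) = f (-(2*(i:ℤ)+1)) := by
      rw [← zpow_add₀ hζ0, hf]; congr 1; ring
    have hP : (ζ:ℂ)^(2*i*(i+1)) = f ((i:ℤ)^2+(i:ℤ)) := by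
      rw [hf, ← zpow_natCast]; congr 1; push_cast; ring
    have e1 : (ζ - ζ⁻¹)^2 * (ζ ^ (2*i*(i+1)) * (qInt ζ (2*i+1))^2)
        = ζ ^ (2*i*(i+1)) * (ζ^(2*(i:ℤ)+1) - ζ^(-(2*(i:ℤ)+1)))^2 := by
      have hc : (ζ - ζ⁻¹)^2 ≠ 0 := pow_ne_zero _ hden
      rw [qInt, div_pow, mul_comm ((ζ - ζ⁻¹)^2), mul_assoc, div_mul_cancel₀ _ hc]
    have e2 : (ζ^(2*(i:ℤ)+1) - ζ^(-(2*(i:ℤ)+1)))^2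
        = f (2*(i:ℤ)+1) - 2 + f (-(2*(i:ℤ)+1)) := by
      have expand : (ζ^(2*(i:ℤ)+1) - ζ^(-(2*(i:ℤ)+1)))^2
          = ζ^(2*(i:ℤ)+1) * ζ^(2*(i:ℤ)+1) - 2*(ζ^(2*(i:ℤ)+1) * ζ^(-(2*(i:ℤ)+1)))
            + ζ^(-(2*(i:ℤ)+1)) * ζ^(-(2*(i:ℤ)+1)) := by ring
      rw [expand, h1, h2, h3]; ring
    have r1 : f (-1) * g ((i:ℤ)+1) = f ((i:ℤ)^2+(i:ℤ)) * f (2*(i:ℤ)+1) := by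
      simp only [hg]; rw [← fadd, ← fadd]; congr 1; ring
    have r2 : f (-1) * g ((i:ℤ)-1) = f ((i:ℤ)^2+(i:ℤ)) * f (-(2*(i:ℤ)+1)) := by
      simp only [hg]; rw [← fadd, ← fadd]; congr 1; ring
    have r3 : (2:ℂ) * g (i:ℤ) = 2 * f ((i:ℤ)^2+(i:ℤ)) := by simp only [hg]
    rw [e1, e2, hP, r1, r2, r3]; ring
  -- partial sums
  set A : ℂ := ∑ i ∈ Finset.range n, g (i:ℤ) with hA
  have S1 : ∑ i ∈ Finset.range n, g ((i:ℤ)+1) = A + g (n:ℤ) - 1 := by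
    have h := Finset.sum_range_succ' (fun j : ℕ => g (j:ℤ)) n
    rw [Finset.sum_range_succ] at h
    simp only [Nat.cast_add, Nat.cast_one, Nat.cast_zero] at h
    rw [← hA] at h
    have h0 : g (0:ℤ) = 1 := by simp only [hg]; norm_num [f0]
    rw [h0] at h
    linear_combination -h
  have S2 : ∑ i ∈ Finset.range n, g ((i:ℤ)-1) = A + 1 - g ((n:ℤ)-1) := by
    have h := Finset.sum_range_succ' (fun j : ℕ => g ((j:ℤ)-1)) n
    rw [Finset.sum_range_succ] at h
    simp only [Nat.cast_add, Nat.cast_one, Nat.cast_zero, add_sub_cancel_right,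
      zero_sub] at h
    rw [← hA] at h
    have h0 : g (-1:ℤ) = 1 := by
      simp only [hg]; norm_num [f0]
    rw [h0] at h
    linear_combination h
  set F : ℂ := ∑ x ∈ Finset.range ℓ, g (x:ℤ) with hFdef
  have hF : F = 2*A + g (n:ℤ) := by
    rw [hFdef, hn, show 2*n+1 = (n+1)+n by ring, Finset.sum_range_add,
      Finset.sum_range_succ]
    have tail : ∑ i ∈ Finset.range n, g (((n+1+i : ℕ)):ℤ) = A := by
      rw [← Finset.sum_range_reflect]
      refine Finset.sum_congr rfl fun j hj => ?_
      have hj' : j < n := Finset.mem_range.mp hj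
      have hcast : ((n + 1 + (n - 1 - j) : ℕ) : ℤ) = 2*(n:ℤ) - j := by omega
      rw [hcast]
      apply gper
      refine ⟨2*((n:ℤ) - j), ?_⟩
      rw [hn]; push_cast; ring
    rw [tail]; ring
  have cancel : f (-1) * g ((n:ℤ)-1) = g (n:ℤ) := by
    simp only [hg]
    rw [← fadd]
    apply fper
    refine ⟨-1, ?_⟩
    rw [hn]; push_cast; ring
  have main : (ζ - ζ⁻¹)^2 * (∑ i ∈ Finset.range n, ζ ^ (2*i*(i+1)) * (qInt ζ (2*i+1))^2)
      = (f (-1) - 1) * F := by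
    rw [Finset.mul_sum]
    rw [Finset.sum_congr rfl (fun i _ => term i)]
    rw [Finset.sum_add_distrib, Finset.sum_sub_distrib, ← Finset.mul_sum,
      ← Finset.mul_sum, ← Finset.mul_sum]
    rw [S1, S2, hF]
    linear_combination -cancel
  -- nonvanishing of F
  haveI : NeZero ℓ := ⟨by omega⟩
  have hτ : IsPrimitiveRoot (ζ^2) ℓ := hζ.pow_of_coprime 2 (Nat.coprime_two_left.mpr hodd)
  have hFne : F ≠ 0 := by
    have hkey := aux_gauss_key ℓ hℓ hodd (ζ^2) hτ
    have hτ1 : (ζ^2) ^ ℓ = 1 := hτ.pow_eq_one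
    have hgx : ∀ x : ℕ, g (x:ℤ) = (ζ^2) ^ (x*x+x) := by
      intro x
      simp only [hg, hf]
      rw [← pow_mul, ← zpow_natCast ζ (2*(x*x+x))]
      congr 1; push_cast; ring
    have hbij : ∑ a : ZMod ℓ, (ζ^2) ^ (a*a+a).val = F := by
      rw [hFdef]
      refine Finset.sum_nbij' (fun a => a.val) (fun x => (x : ZMod ℓ)) ?_ ?_ ?_ ?_ ?_
      · intro a _; exact Finset.mem_range.mpr (ZMod.val_lt a)
      · intro x _; exact Finset.mem_univ _
      · intro a _; simp [ZMod.natCast_val, ZMod.cast_id]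
      · intro x hx; exact ZMod.val_cast_of_lt (Finset.mem_range.mp hx)
      · intro a _
        rw [hgx a.val]
        have hval : (a*a+a).val = (a.val * a.val + a.val) % ℓ := by
          have : a*a+a = (((a.val * a.val + a.val : ℕ)) : ZMod ℓ) := by
            push_cast [ZMod.natCast_val, ZMod.cast_id]
            ring
          rw [this, ZMod.val_natCast]
        rw [hval, ← pow_eq_pow_mod _ hτ1]
    rw [← hbij]
    exact hkey
  intro hS
  have hz : (ζ - ζ⁻¹)^2 * (∑ i ∈ Finset.range n, ζ ^ (2*i*(i+1)) * (qInt ζ (2*i+1))^2) = 0 := by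
    rw [hS, mul_zero]
  rw [main] at hz
  rcases mul_eq_zero.mp hz with h | h
  · exact hfm1 h
  · exact hFne h
end
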